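/- arXiv:1506.04731 — 4 statements merged into one kernel-verified Lean document; each statement's English description precedes it below -/
import Mathlib

section
/- Let 1/2 < H₁ < H₂ < 1 and K_{H₁,H₂}(t,s) = β_{H₂} s^{1/2 - H₂} ∫ₛᵗ (t-u)^{1/2 - H₁} u^{H₂ - H₁} (u-s)^{H₂ - 3/2} du for 0 < s < t ≤ T. Then 0 ≤ K_{H₁,H₂}(t,s) ≤ β_{H₂} B(3/2 - H₁, H₂ - 1/2) t^{H₂ - H₁} s^{1/2 - H₂} (t - s)^{H₂ - H₁}. -/
open MeasureTheory intervalIntegral Real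

lemma beta_integrable (u v : ℝ) (hu : -1 < u) (hv : -1 < v) :
    IntervalIntegrable (fun x : ℝ => x ^ u * (1 - x) ^ v) volume 0 1 := by
  apply IntervalIntegrable.trans (b := 1/2)
  · refine (intervalIntegrable_rpow' hu).mul_continuousOn ?_
    refine (continuousOn_const.sub continuousOn_id).rpow_const fun x hx => Or.inl ?_
    rw [Set.uIcc_of_le (by norm_num : (0:ℝ) ≤ 1/2)] at hx
    have := hx.2
    intro h
    simp only [Pi.sub_apply, id] at h
    linarith [sub_eq_zero.mp h]
  · have hint : IntervalIntegrable (fun x : ℝ => (1 - x) ^ v) volume (1/2) 1 := by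
      have h0 : IntervalIntegrable (fun x : ℝ => x ^ v) volume 0 (1/2) :=
        intervalIntegrable_rpow' hv
      have h1 := (h0.comp_sub_left 1).symm
      norm_num at h1
      exact h1
    refine hint.continuousOn_mul ?_
    refine continuousOn_id.rpow_const fun x hx => Or.inl ?_
    rw [Set.uIcc_of_le (by norm_num : (1:ℝ)/2 ≤ 1)] at hx
    have := hx.1
    intro h
    simp only [id] at h
    linarith

lemma beta_value (u v : ℝ) (hu : -1 < u) (hv : -1 < v) :
    ∫ x in (0:ℝ)..1, x ^ u * (1 - x) ^ v =
      Real.Gamma (u + 1) * Real.Gamma (v + 1) / Real.Gamma (u + v + 2) := by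
  have hbi : Complex.betaIntegral (u + 1) (v + 1) =
      ((∫ x in (0:ℝ)..1, x ^ u * (1 - x) ^ v : ℝ) : ℂ) := by
    rw [Complex.betaIntegral, ← intervalIntegral.integral_ofReal]
    refine intervalIntegral.integral_congr fun x hx => ?_
    rw [Set.uIcc_of_le zero_le_one] at hx
    rw [Complex.ofReal_mul, Complex.ofReal_cpow hx.1, Complex.ofReal_cpow (by linarith [hx.2] : (0:ℝ) ≤ 1 - x)]
    push_cast
    ring_nf
  have hΓ := Complex.Gamma_mul_Gamma_eq_betaIntegral (s := (u:ℂ) + 1) (t := (v:ℂ) + 1)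
    (by simp [Complex.add_re]; linarith) (by simp [Complex.add_re]; linarith)
  rw [hbi] at hΓ
  have e1 : (u:ℂ) + 1 = ((u + 1 : ℝ) : ℂ) := by push_cast; ring
  have e2 : (v:ℂ) + 1 = ((v + 1 : ℝ) : ℂ) := by push_cast; ring
  have e3 : (u:ℂ) + 1 + ((v:ℂ) + 1) = ((u + v + 2 : ℝ) : ℂ) := by push_cast; ring
  rw [e1, e2] at hΓ
  rw [show ((u + 1 : ℝ) : ℂ) + ((v + 1 : ℝ) : ℂ) = ((u + v + 2 : ℝ) : ℂ) by push_cast; ring] at hΓ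
  rw [Complex.Gamma_ofReal, Complex.Gamma_ofReal, Complex.Gamma_ofReal, ← Complex.ofReal_mul,
    ← Complex.ofReal_mul] at hΓ
  have hreal : Real.Gamma (u + 1) * Real.Gamma (v + 1) =
      Real.Gamma (u + v + 2) * ∫ x in (0:ℝ)..1, x ^ u * (1 - x) ^ v :=
    Complex.ofReal_inj.mp hΓ
  have hΓpos : 0 < Real.Gamma (u + v + 2) := Real.Gamma_pos_of_pos (by linarith)
  field_simp [hreal.symm]
  linarith [hreal]

/-- Bounds for the kernel `K_{H₁,H₂}`:
`0 ≤ K_{H₁,H₂}(t,s) ≤ β B(3/2-H₁, H₂-1/2) t^{H₂-H₁} s^{1/2-H₂} (t-s)^{H₂-H₁}`. -/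
theorem kernel_bounds (H₁ H₂ β s t : ℝ)
    (h1 : 1/2 < H₁) (h12 : H₁ < H₂) (h2 : H₂ < 1) (hβ : 0 < β)
    (hs : 0 < s) (hst : s < t) :
    0 ≤ β * s ^ (1/2 - H₂) *
        ∫ u in s..t, (t - u) ^ (1/2 - H₁) * u ^ (H₂ - H₁) * (u - s) ^ (H₂ - 3/2) ∧
    β * s ^ (1/2 - H₂) *
        ∫ u in s..t, (t - u) ^ (1/2 - H₁) * u ^ (H₂ - H₁) * (u - s) ^ (H₂ - 3/2) ≤
      β * (Real.Gamma (3/2 - H₁) * Real.Gamma (H₂ - 1/2) / Real.Gamma (1 + H₂ - H₁)) *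
        t ^ (H₂ - H₁) * s ^ (1/2 - H₂) * (t - s) ^ (H₂ - H₁) := by
  have hc : (0:ℝ) < t - s := by linarith
  have ht0 : (0:ℝ) < t := by linarith
  -- nonnegativity
  have hInonneg : 0 ≤ ∫ u in s..t, (t - u) ^ (1/2 - H₁) * u ^ (H₂ - H₁) * (u - s) ^ (H₂ - 3/2) := by
    refine intervalIntegral.integral_nonneg hst.le fun u hu => ?_
    have h1u : 0 ≤ t - u := by linarith [hu.2]
    have h2u : 0 ≤ u := by linarith [hu.1]
    have h3u : 0 ≤ u - s := by linarith [hu.1]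
    positivity
  constructor
  · have : 0 ≤ β * s ^ (1/2 - H₂) := by positivity
    exact mul_nonneg this hInonneg
  -- upper bound
  have key := intervalIntegral.smul_integral_comp_mul_add
    (f := fun u => (t - u) ^ (1/2 - H₁) * u ^ (H₂ - H₁) * (u - s) ^ (H₂ - 3/2))
    (a := 0) (b := 1) (t - s) s
  simp only [mul_zero, zero_add, mul_one, sub_add_cancel, smul_eq_mul] at key
  -- rewrite the substituted integrand
  have hJeq : (∫ x in (0:ℝ)..1,
        (t - ((t - s) * x + s)) ^ (1/2 - H₁) * ((t - s) * x + s) ^ (H₂ - H₁) *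
          ((t - s) * x + s - s) ^ (H₂ - 3/2)) =
      (t - s) ^ (1/2 - H₁) * (t - s) ^ (H₂ - 3/2) *
        ∫ x in (0:ℝ)..1, ((t - s) * x + s) ^ (H₂ - H₁) * (x ^ (H₂ - 3/2) * (1 - x) ^ (1/2 - H₁)) := by
    rw [← intervalIntegral.integral_const_mul]
    refine intervalIntegral.integral_congr fun x hx => ?_
    rw [Set.uIcc_of_le zero_le_one] at hx
    have e1 : t - ((t - s) * x + s) = (t - s) * (1 - x) := by ring
    have e2 : (t - s) * x + s - s = (t - s) * x := by ring
    rw [e1, e2, Real.mul_rpow hc.le (by linarith [hx.2]), Real.mul_rpow hc.le hx.1]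
    ring
  set J := ∫ x in (0:ℝ)..1, ((t - s) * x + s) ^ (H₂ - H₁) * (x ^ (H₂ - 3/2) * (1 - x) ^ (1/2 - H₁))
    with hJ
  have hbint : IntervalIntegrable (fun x : ℝ => x ^ (H₂ - 3/2) * (1 - x) ^ (1/2 - H₁))
      volume 0 1 := beta_integrable _ _ (by linarith) (by linarith)
  -- integrability of the substituted integrand
  have hcont : ContinuousOn (fun x : ℝ => ((t - s) * x + s) ^ (H₂ - H₁)) (Set.uIcc 0 1) := by
    refine (((continuous_const.mul continuous_id).add continuous_const).continuousOn).rpow_const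
      fun x hx => Or.inl ?_
    rw [Set.uIcc_of_le zero_le_one] at hx
    have : 0 ≤ (t - s) * x := mul_nonneg hc.le hx.1
    simp only [Pi.add_apply, Pi.mul_apply, id]
    exact (by linarith : (0:ℝ) < (t - s) * x + s).ne'
  have hJint : IntervalIntegrable
      (fun x : ℝ => ((t - s) * x + s) ^ (H₂ - H₁) * (x ^ (H₂ - 3/2) * (1 - x) ^ (1/2 - H₁)))
      volume 0 1 := hbint.continuousOn_mul hcont
  -- pointwise bound
  have hJle : J ≤ t ^ (H₂ - H₁) * ∫ x in (0:ℝ)..1, x ^ (H₂ - 3/2) * (1 - x) ^ (1/2 - H₁) := by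
    rw [← intervalIntegral.integral_const_mul]
    refine intervalIntegral.integral_mono_on zero_le_one hJint (hbint.const_mul _) fun x hx => ?_
    have hbase : 0 ≤ (t - s) * x + s := by
      have : 0 ≤ (t - s) * x := mul_nonneg hc.le hx.1
      linarith
    have hle : (t - s) * x + s ≤ t := by nlinarith [hx.2, hc.le]
    have h1 : ((t - s) * x + s) ^ (H₂ - H₁) ≤ t ^ (H₂ - H₁) :=
      Real.rpow_le_rpow hbase hle (by linarith)
    have h2 : 0 ≤ x ^ (H₂ - 3/2) * (1 - x) ^ (1/2 - H₁) :=
      mul_nonneg (Real.rpow_nonneg hx.1 _) (Real.rpow_nonneg (by linarith [hx.2]) _)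
    exact mul_le_mul_of_nonneg_right h1 h2
  -- value of the beta integral
  have hbval : (∫ x in (0:ℝ)..1, x ^ (H₂ - 3/2) * (1 - x) ^ (1/2 - H₁)) =
      Real.Gamma (H₂ - 1/2) * Real.Gamma (3/2 - H₁) / Real.Gamma (1 + H₂ - H₁) := by
    have := beta_value (H₂ - 3/2) (1/2 - H₁) (by linarith) (by linarith)
    rw [this]
    norm_num
    rw [show H₂ - 3/2 + 1 = H₂ - 1/2 by ring, show 1/2 - H₁ + 1 = 3/2 - H₁ by ring,
      show H₂ - 3/2 + (1/2 - H₁) + 2 = 1 + H₂ - H₁ by ring]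
  -- put everything together
  have hIeq : (∫ u in s..t, (t - u) ^ (1/2 - H₁) * u ^ (H₂ - H₁) * (u - s) ^ (H₂ - 3/2)) =
      (t - s) * ((t - s) ^ (1/2 - H₁) * (t - s) ^ (H₂ - 3/2)) * J := by
    rw [← key, hJeq]; ring
  have hpow : (t - s) * ((t - s) ^ (1/2 - H₁) * (t - s) ^ (H₂ - 3/2)) = (t - s) ^ (H₂ - H₁) := by
    rw [← Real.rpow_add hc, ← Real.rpow_one_add' hc.le (by intro h; linarith [h] : 1 + (1/2 - H₁ + (H₂ - 3/2)) ≠ 0)]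
    congr 1
    ring
  have hIle : (∫ u in s..t, (t - u) ^ (1/2 - H₁) * u ^ (H₂ - H₁) * (u - s) ^ (H₂ - 3/2)) ≤
      (t - s) ^ (H₂ - H₁) * (t ^ (H₂ - H₁) *
        (Real.Gamma (H₂ - 1/2) * Real.Gamma (3/2 - H₁) / Real.Gamma (1 + H₂ - H₁))) := by
    rw [hIeq, hpow, ← hbval]
    have h0 : 0 ≤ (t - s) ^ (H₂ - H₁) := Real.rpow_nonneg hc.le _
    exact mul_le_mul_of_nonneg_left hJle h0
  have hmul : β * s ^ (1/2 - H₂) *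
        (∫ u in s..t, (t - u) ^ (1/2 - H₁) * u ^ (H₂ - H₁) * (u - s) ^ (H₂ - 3/2)) ≤
      β * s ^ (1/2 - H₂) *
        ((t - s) ^ (H₂ - H₁) * (t ^ (H₂ - H₁) *
          (Real.Gamma (H₂ - 1/2) * Real.Gamma (3/2 - H₁) / Real.Gamma (1 + H₂ - H₁)))) :=
    mul_le_mul_of_nonneg_left hIle (by positivity)
  have heq : β * s ^ (1/2 - H₂) *
        ((t - s) ^ (H₂ - H₁) * (t ^ (H₂ - H₁) *
          (Real.Gamma (H₂ - 1/2) * Real.Gamma (3/2 - H₁) / Real.Gamma (1 + H₂ - H₁)))) =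
      β * (Real.Gamma (3/2 - H₁) * Real.Gamma (H₂ - 1/2) / Real.Gamma (1 + H₂ - H₁)) *
        t ^ (H₂ - H₁) * s ^ (1/2 - H₂) * (t - s) ^ (H₂ - H₁) := by ring
  linarith
end

section
/- Let 1/2 < H₁ < H₂ < 1 and let ∂_t K_{H₁,H₂}(t,s) denote the partial derivative in t of K_{H₁,H₂}(t,s) = β_{H₂} s^{1/2-H₂} ∫ₛᵗ (t-u)^{1/2-H₁} u^{H₂-H₁} (u-s)^{H₂-3/2} du. Then for 0 < s < t: ∂_t K_{H₁,H₂}(t,s) = (H₂ - H₁)[ K_{H₁,H₂}(t,s)/(t-s) + β_{H₂} s^{1/2-H₂} (t-s)^{-1} ∫ₛᵗ (t-r)^{1/2-H₁} r^{H₂-H₁-1} (r-s)^{H₂-1/2} dr ]. -/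
open MeasureTheory intervalIntegral Set
open scoped Interval

lemma betaInt {p q : ℝ} (hp : -1 < p) (hq : -1 < q) :
    IntervalIntegrable (fun v => (1 - v) ^ p * v ^ q) volume 0 1 := by
  apply IntervalIntegrable.trans (b := 1/2)
  · have h1 : IntervalIntegrable (fun v : ℝ => v ^ q) volume 0 (1/2) :=
      intervalIntegrable_rpow' hq
    have hc : ContinuousOn (fun v : ℝ => (1 - v) ^ p) [[(0:ℝ), 1/2]] := by
      apply ContinuousOn.rpow_const (by fun_prop)
      intro v hv
      rw [Set.uIcc_of_le (by norm_num)] at hv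
      left; intro h; nlinarith [hv.1, hv.2]
    simpa [mul_comm] using h1.continuousOn_mul hc
  · have h1 : IntervalIntegrable (fun v : ℝ => v ^ p) volume 0 (1/2) :=
      intervalIntegrable_rpow' hp
    have h2 : IntervalIntegrable (fun v : ℝ => (1 - v) ^ p) volume (1/2) 1 := by
      have := (h1.comp_sub_left 1).symm; norm_num at this; convert this using 2
    have hc : ContinuousOn (fun v : ℝ => v ^ q) [[(1:ℝ)/2, 1]] := by
      apply ContinuousOn.rpow_const (by fun_prop)
      intro v hv
      rw [Set.uIcc_of_le (by norm_num)] at hv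
      left; intro h; nlinarith [hv.1, hv.2]
    exact h2.mul_continuousOn hc

lemma key_subst (g : ℝ → ℝ) {s c : ℝ} (hc : 0 < c) :
    ∫ u in s..(s + c), g u = c * ∫ v in (0:ℝ)..1, g (c * v + s) := by
  rw [intervalIntegral.integral_comp_mul_add g hc.ne' s]
  simp only [mul_zero, zero_add, mul_one, smul_eq_mul]
  rw [← mul_assoc, mul_inv_cancel₀ hc.ne', one_mul, add_comm c s]

lemma scaled (s c p q m : ℝ) (hc : 0 < c) :
    (∫ u in s..(s + c), (s + c - u) ^ p * u ^ m * (u - s) ^ q) =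
      c ^ (p + q + 1) * ∫ v in (0:ℝ)..1, (1 - v) ^ p * v ^ q * (c * v + s) ^ m := by
  rw [key_subst (fun u => (s + c - u) ^ p * u ^ m * (u - s) ^ q) hc]
  have heq : Set.EqOn
      (fun v => (s + c - (c * v + s)) ^ p * (c * v + s) ^ m * (c * v + s - s) ^ q)
      (fun v => c ^ p * c ^ q * ((1 - v) ^ p * v ^ q * (c * v + s) ^ m))
      [[ (0:ℝ), 1 ]] := by
    intro v hv
    rw [Set.uIcc_of_le (by norm_num)] at hv
    have e1 : s + c - (c * v + s) = c * (1 - v) := by ring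
    have e2 : c * v + s - s = c * v := by ring
    simp only [e1, e2, Real.mul_rpow hc.le (by linarith [hv.2] : (0:ℝ) ≤ 1 - v),
      Real.mul_rpow hc.le hv.1]
    ring
  rw [intervalIntegral.integral_congr heq, intervalIntegral.integral_const_mul,
    show p + q + 1 = 1 + (p + q) by ring, Real.rpow_add hc, Real.rpow_add hc, Real.rpow_one]
  ring

/-- Formula for the partial derivative in `t` of the kernel `K_{H₁,H₂}(t,s)`. -/
theorem kernel_partial_deriv (H₁ H₂ β s t : ℝ)
    (h1 : 1/2 < H₁) (h12 : H₁ < H₂) (h2 : H₂ < 1) (hβ : 0 < β)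
    (hs : 0 < s) (hst : s < t)
    (K : ℝ → ℝ → ℝ)
    (hK : ∀ t' s', K t' s' = β * s' ^ (1/2 - H₂) *
      ∫ u in s'..t', (t' - u) ^ (1/2 - H₁) * u ^ (H₂ - H₁) * (u - s') ^ (H₂ - 3/2)) :
    HasDerivAt (fun τ => K τ s)
      ((H₂ - H₁) * (K t s / (t - s) +
        β * s ^ (1/2 - H₂) * (t - s)⁻¹ *
          ∫ r in s..t, (t - r) ^ (1/2 - H₁) * r ^ (H₂ - H₁ - 1) * (r - s) ^ (H₂ - 1/2)))
      t := by
  have hts : 0 < t - s := sub_pos.2 hst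
  have hm : 0 < H₂ - H₁ := sub_pos.2 h12
  have hp : (-1 : ℝ) < 1/2 - H₁ := by linarith
  have hq : (-1 : ℝ) < H₂ - 3/2 := by linarith
  have hm1 : H₂ - H₁ - 1 ≤ 0 := by linarith
  -- eventual equality of K · s with the scaled form
  have heq : ∀ τ ∈ Set.Ioi s, K τ s = β * s ^ (1/2 - H₂) *
      ((τ - s) ^ (H₂ - H₁) *
        ∫ v in (0:ℝ)..1, (1 - v) ^ (1/2 - H₁) * v ^ (H₂ - 3/2) * ((τ - s) * v + s) ^ (H₂ - H₁)) := by
    intro τ hτ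
    have hc : 0 < τ - s := sub_pos.2 hτ
    have hsc := scaled s (τ - s) (1/2 - H₁) (H₂ - 3/2) (H₂ - H₁) hc
    rw [show s + (τ - s) = τ by ring,
      show (1/2 - H₁) + (H₂ - 3/2) + 1 = H₂ - H₁ by ring] at hsc
    rw [hK, hsc, mul_assoc]
  -- derivative of the parametric integral
  have hball : ∀ x ∈ Metric.ball t ((t - s)/2), 0 < x - s := by
    intro x hx
    rw [Metric.mem_ball, Real.dist_eq, abs_lt] at hx
    linarith [hx.1]
  obtain ⟨-, hF⟩ := intervalIntegral.hasDerivAt_integral_of_dominated_loc_of_deriv_le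
    (F := fun x v => (1 - v) ^ (1/2 - H₁) * v ^ (H₂ - 3/2) * ((x - s) * v + s) ^ (H₂ - H₁))
    (F' := fun x v => (1 - v) ^ (1/2 - H₁) * v ^ (H₂ - 3/2) *
      ((H₂ - H₁) * ((x - s) * v + s) ^ (H₂ - H₁ - 1) * v))
    (x₀ := t) (a := (0:ℝ)) (b := 1) (μ := volume)
    (s := Metric.ball t ((t - s)/2))
    (bound := fun v => (H₂ - H₁) * s ^ (H₂ - H₁ - 1) * ((1 - v) ^ (1/2 - H₁) * v ^ (H₂ - 3/2)))
    (Metric.ball_mem_nhds _ (by linarith))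
    (Filter.Eventually.of_forall fun x => (by fun_prop : Measurable _).aestronglyMeasurable)
    ((betaInt hp hq).mul_continuousOn
      (ContinuousOn.rpow_const (by fun_prop) fun v _ => Or.inr hm.le))
    ((by fun_prop : Measurable _).aestronglyMeasurable)
    (Filter.Eventually.of_forall fun v hv x hx => by
      rw [Set.uIoc_of_le (by norm_num : (0:ℝ) ≤ 1)] at hv
      have hxs := hball x hx
      have hbase : s ≤ (x - s) * v + s := by nlinarith [hv.1.le, hxs]
      have hb0 : (0:ℝ) ≤ (x - s) * v + s := by linarith
      have h1v : (0:ℝ) ≤ 1 - v := by linarith [hv.2]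
      rw [Real.norm_eq_abs, abs_of_nonneg (mul_nonneg
        (mul_nonneg (Real.rpow_nonneg h1v _) (Real.rpow_nonneg hv.1.le _))
        (mul_nonneg (mul_nonneg hm.le (Real.rpow_nonneg hb0 _)) hv.1.le))]
      have hmono : ((x - s) * v + s) ^ (H₂ - H₁ - 1) ≤ s ^ (H₂ - H₁ - 1) :=
        Real.rpow_le_rpow_of_nonpos hs hbase hm1
      have hkey : ((x - s) * v + s) ^ (H₂ - H₁ - 1) * v ≤ s ^ (H₂ - H₁ - 1) * 1 :=
        mul_le_mul hmono hv.2 hv.1.le (Real.rpow_nonneg hs.le _)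
      calc (1 - v) ^ (1/2 - H₁) * v ^ (H₂ - 3/2) *
            ((H₂ - H₁) * ((x - s) * v + s) ^ (H₂ - H₁ - 1) * v)
          = ((1 - v) ^ (1/2 - H₁) * v ^ (H₂ - 3/2) * (H₂ - H₁)) *
            (((x - s) * v + s) ^ (H₂ - H₁ - 1) * v) := by ring
        _ ≤ ((1 - v) ^ (1/2 - H₁) * v ^ (H₂ - 3/2) * (H₂ - H₁)) *
            (s ^ (H₂ - H₁ - 1) * 1) := by
            exact mul_le_mul_of_nonneg_left hkey (mul_nonneg
              (mul_nonneg (Real.rpow_nonneg h1v _) (Real.rpow_nonneg hv.1.le _)) hm.le)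
        _ = (H₂ - H₁) * s ^ (H₂ - H₁ - 1) * ((1 - v) ^ (1/2 - H₁) * v ^ (H₂ - 3/2)) := by ring)
    ((betaInt hp hq).const_mul _)
    (Filter.Eventually.of_forall fun v hv x hx => by
      rw [Set.uIoc_of_le (by norm_num : (0:ℝ) ≤ 1)] at hv
      have hxs := hball x hx
      have hbase : 0 < (x - s) * v + s := by nlinarith [hv.1.le]
      have hinner : HasDerivAt (fun y => (y - s) * v + s) v x := by
        simpa using (((hasDerivAt_id x).sub_const s).mul_const v).add_const s
      have houter := (Real.hasDerivAt_rpow_const (p := H₂ - H₁) (Or.inl hbase.ne')).comp x hinner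
      exact houter.const_mul _)
  -- derivative of the power factor
  have hPow : HasDerivAt (fun τ => (τ - s) ^ (H₂ - H₁))
      ((H₂ - H₁) * (t - s) ^ (H₂ - H₁ - 1)) t := by
    have := (Real.hasDerivAt_rpow_const (p := H₂ - H₁) (Or.inl hts.ne')).comp t
      ((hasDerivAt_id t).sub_const s)
    simpa [Function.comp_def] using this
  have hKd := (hPow.mul hF).const_mul (β * s ^ (1/2 - H₂))
  have hfinal : HasDerivAt (fun τ => K τ s)
      (β * s ^ (1/2 - H₂) *
        ((H₂ - H₁) * (t - s) ^ (H₂ - H₁ - 1) *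
            (∫ v in (0:ℝ)..1, (1 - v) ^ (1/2 - H₁) * v ^ (H₂ - 3/2) *
              ((t - s) * v + s) ^ (H₂ - H₁)) +
          (t - s) ^ (H₂ - H₁) *
            ∫ v in (0:ℝ)..1, (1 - v) ^ (1/2 - H₁) * v ^ (H₂ - 3/2) *
              ((H₂ - H₁) * ((t - s) * v + s) ^ (H₂ - H₁ - 1) * v))) t := by
    refine hKd.congr_of_eventuallyEq ?_
    filter_upwards [Ioi_mem_nhds hst] with τ hτ
    exact heq τ hτ
  convert hfinal using 1
  -- identify the two integrals
  have hJ : (∫ r in s..t, (t - r) ^ (1/2 - H₁) * r ^ (H₂ - H₁ - 1) * (r - s) ^ (H₂ - 1/2)) =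
      (t - s) ^ (H₂ - H₁ + 1) *
        ∫ v in (0:ℝ)..1, (1 - v) ^ (1/2 - H₁) * v ^ (H₂ - 1/2) * ((t - s) * v + s) ^ (H₂ - H₁ - 1) := by
    have hsc := scaled s (t - s) (1/2 - H₁) (H₂ - 1/2) (H₂ - H₁ - 1) hts
    rw [show s + (t - s) = t by ring,
      show (1/2 - H₁) + (H₂ - 1/2) + 1 = H₂ - H₁ + 1 by ring] at hsc
    exact hsc
  have hD : (∫ v in (0:ℝ)..1, (1 - v) ^ (1/2 - H₁) * v ^ (H₂ - 3/2) *
        ((H₂ - H₁) * ((t - s) * v + s) ^ (H₂ - H₁ - 1) * v)) =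
      (H₂ - H₁) * ∫ v in (0:ℝ)..1, (1 - v) ^ (1/2 - H₁) * v ^ (H₂ - 1/2) *
        ((t - s) * v + s) ^ (H₂ - H₁ - 1) := by
    rw [← intervalIntegral.integral_const_mul]
    apply intervalIntegral.integral_congr
    intro v hv
    rw [Set.uIcc_of_le (by norm_num)] at hv
    dsimp only
    rcases eq_or_ne v 0 with rfl | hv0
    · rw [Real.zero_rpow (show H₂ - 1/2 ≠ 0 by intro h; linarith)]
      ring
    · have hvv : v ^ (H₂ - 1/2) = v ^ (H₂ - 3/2) * v := by
        rw [show H₂ - 1/2 = (H₂ - 3/2) + 1 by ring, Real.rpow_add_one hv0]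
      rw [hvv]; ring
  rw [heq t (Set.mem_Ioi.mpr hst), hJ, hD]
  have e1 : (t - s) ^ (H₂ - H₁ - 1) = (t - s) ^ (H₂ - H₁) / (t - s) :=
    Real.rpow_sub_one hts.ne' _
  have e2 : (t - s) ^ (H₂ - H₁ + 1) = (t - s) ^ (H₂ - H₁) * (t - s) :=
    Real.rpow_add_one hts.ne' _
  rw [e1, e2]
  field_simp
end

section
/- Let 1/2 < H₁ < H₂ < 1 with H₂ - H₁ > 1/4, and let k₁: (0,T)² → ℝ be a measurable function satisfying 0 ≤ k₁(s,u) ≤ C u^{H₁ - 1/2} s^{1/2 - H₁} (u - s)^{2H₂ - 2H₁ - 1} for s < u and 0 ≤ k₁(s,u) ≤ C s^{H₁ - 1/2} u^{1/2 - H₁} (s - u)^{2H₂ - 2H₁ - 1} for u < s, for some constant C > 0. Then ∫₀ᵀ ∫₀ᵀ k₁(s,u)² ds du ≤ C' T^{4H₂ - 4H₁} for some constant C' depending only on H₁, H₂, C; in particular k₁ ∈ L²([0,T]²). -/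
open MeasureTheory intervalIntegral Set

section helpers

lemma sq_rpow' {x : ℝ} (hx : 0 ≤ x) (e : ℝ) : (x ^ e) ^ (2:ℕ) = x ^ (2*e) := by
  rw [← Real.rpow_natCast (x ^ e) 2, ← Real.rpow_mul hx]
  norm_num [mul_comm]

lemma rpow_setIntegral {r M : ℝ} (hr : -1 < r) (hM : 0 ≤ M) :
    IntegrableOn (fun s : ℝ => s ^ r) (Ioo 0 M) ∧
    ∫ s in Ioo 0 M, s ^ r = M ^ (r+1) / (r+1) := by
  constructor
  · exact ((intervalIntegrable_iff_integrableOn_Ioc_of_le hM).mp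
      (intervalIntegrable_rpow' hr)).mono_set Ioo_subset_Ioc_self
  · rw [← integral_Ioc_eq_integral_Ioo, ← intervalIntegral.integral_of_le hM,
        integral_rpow (Or.inl hr), Real.zero_rpow (by linarith), sub_zero]

lemma lemA {a b u : ℝ} (ha : -1 < a) (ha0 : a < 0) (hb : -1 < b) (hb0 : b < 0) (hu : 0 < u) :
    IntegrableOn (fun s : ℝ => s ^ a * (u - s) ^ b) (Ioo 0 u) ∧
    ∫ s in Ioo 0 u, s ^ a * (u - s) ^ b
      ≤ (1/(a+1) + 1/(b+1)) * (u/2) ^ (a+b+1) := by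
  set m := u/2 with hm
  have hm0 : 0 < m := by positivity
  have hmu : m < u := by rw [hm]; linarith
  have hum : u - m = m := by rw [hm]; ring
  have hsplit : Ioc 0 m ∪ Ioo m u = Ioo 0 u := Ioc_union_Ioo_eq_Ioo hm0.le hmu
  have hmeasf : Measurable (fun s : ℝ => s ^ a * (u - s) ^ b) :=
    (measurable_id.pow_const a).mul ((measurable_const.sub measurable_id).pow_const b)
  have Ia : IntegrableOn (fun s : ℝ => s ^ a) (Ioc 0 m) :=
    (intervalIntegrable_iff_integrableOn_Ioc_of_le hm0.le).mp (intervalIntegrable_rpow' ha)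
  have Ib : IntegrableOn (fun s : ℝ => (u - s) ^ b) (Ioc m u) := by
    have h0 : IntervalIntegrable (fun x : ℝ => x ^ b) volume 0 m := intervalIntegrable_rpow' hb
    have h1 := (h0.comp_sub_left u).symm
    rw [sub_zero, hum] at h1
    exact (intervalIntegrable_iff_integrableOn_Ioc_of_le hmu.le).mp h1
  have hb1 : ∀ s ∈ Ioc (0:ℝ) m, s ^ a * (u - s) ^ b ≤ m ^ b * s ^ a := by
    intro s hs
    have h1 : (0:ℝ) ≤ s ^ a := Real.rpow_nonneg hs.1.le a
    have h3 : (u - s) ^ b ≤ m ^ b :=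
      Real.rpow_le_rpow_of_nonpos hm0 (by linarith [hs.2]) hb0.le
    calc s ^ a * (u - s) ^ b ≤ s ^ a * m ^ b := mul_le_mul_of_nonneg_left h3 h1
    _ = m ^ b * s ^ a := mul_comm _ _
  have hb2 : ∀ s ∈ Ioo m u, s ^ a * (u - s) ^ b ≤ m ^ a * (u - s) ^ b := by
    intro s hs
    have h2 : (0:ℝ) ≤ (u - s) ^ b := Real.rpow_nonneg (by linarith [hs.2]) b
    have h3 : s ^ a ≤ m ^ a := Real.rpow_le_rpow_of_nonpos hm0 hs.1.le ha0.le
    exact mul_le_mul_of_nonneg_right h3 h2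
  have hIoc : IntegrableOn (fun s : ℝ => s ^ a * (u - s) ^ b) (Ioc 0 m) := by
    refine Integrable.mono' (Ia.const_mul (m ^ b)) hmeasf.aestronglyMeasurable ?_
    refine (ae_restrict_iff' measurableSet_Ioc).mpr (Filter.Eventually.of_forall ?_)
    intro s hs
    have h1 : (0:ℝ) ≤ s ^ a := Real.rpow_nonneg hs.1.le a
    have h2 : (0:ℝ) ≤ (u - s) ^ b := Real.rpow_nonneg (by linarith [hs.2, hmu]) b
    rw [Real.norm_eq_abs, abs_of_nonneg (mul_nonneg h1 h2)]
    exact hb1 s hs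
  have hIoo : IntegrableOn (fun s : ℝ => s ^ a * (u - s) ^ b) (Ioo m u) := by
    refine Integrable.mono' ((Ib.mono_set Ioo_subset_Ioc_self).const_mul (m ^ a))
      hmeasf.aestronglyMeasurable ?_
    refine (ae_restrict_iff' measurableSet_Ioo).mpr (Filter.Eventually.of_forall ?_)
    intro s hs
    have h1 : (0:ℝ) ≤ s ^ a := Real.rpow_nonneg (by linarith [hs.1]) a
    have h2 : (0:ℝ) ≤ (u - s) ^ b := Real.rpow_nonneg (by linarith [hs.2]) b
    rw [Real.norm_eq_abs, abs_of_nonneg (mul_nonneg h1 h2)]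
    exact hb2 s hs
  have hdisj : Disjoint (Ioc (0:ℝ) m) (Ioo m u) := by
    rw [Set.disjoint_left]
    rintro x ⟨_, h1⟩ ⟨h2, _⟩
    exact absurd h1 (not_le.mpr h2)
  refine ⟨hsplit ▸ hIoc.union hIoo, ?_⟩
  have hsum : ∫ s in Ioo 0 u, s ^ a * (u - s) ^ b
      = (∫ s in Ioc 0 m, s ^ a * (u - s) ^ b) + ∫ s in Ioo m u, s ^ a * (u - s) ^ b := by
    rw [← hsplit, setIntegral_union hdisj measurableSet_Ioo hIoc hIoo]
  have e1 : ∫ s in Ioc (0:ℝ) m, m ^ b * s ^ a = m ^ b * (m ^ (a+1) / (a+1)) := by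
    rw [MeasureTheory.integral_const_mul, ← intervalIntegral.integral_of_le hm0.le,
        integral_rpow (Or.inl ha), Real.zero_rpow (by linarith), sub_zero]
  have e2 : ∫ s in Ioo m u, m ^ a * (u - s) ^ b = m ^ a * (m ^ (b+1) / (b+1)) := by
    rw [MeasureTheory.integral_const_mul, ← integral_Ioc_eq_integral_Ioo,
        ← intervalIntegral.integral_of_le hmu.le]
    rw [show (∫ s in m..u, (u - s) ^ b) = ∫ x in u - u..u - m, x ^ b from
      integral_comp_sub_left (fun x : ℝ => x ^ b) u]
    rw [sub_self, hum, integral_rpow (Or.inl hb), Real.zero_rpow (by linarith), sub_zero]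
  have le1 : ∫ s in Ioc 0 m, s ^ a * (u - s) ^ b ≤ m ^ b * (m ^ (a+1) / (a+1)) := by
    rw [← e1]
    exact setIntegral_mono_on hIoc (Ia.const_mul _) measurableSet_Ioc hb1
  have le2 : ∫ s in Ioo m u, s ^ a * (u - s) ^ b ≤ m ^ a * (m ^ (b+1) / (b+1)) := by
    rw [← e2]
    exact setIntegral_mono_on hIoo ((Ib.mono_set Ioo_subset_Ioc_self).const_mul _)
      measurableSet_Ioo hb2
  have key : m ^ b * (m ^ (a+1) / (a+1)) + m ^ a * (m ^ (b+1) / (b+1))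
      = (1/(a+1) + 1/(b+1)) * m ^ (a+b+1) := by
    rw [show m ^ b * (m ^ (a+1) / (a+1)) = (m ^ b * m ^ (a+1)) / (a+1) by ring,
        show m ^ a * (m ^ (b+1) / (b+1)) = (m ^ a * m ^ (b+1)) / (b+1) by ring,
        ← Real.rpow_add hm0, ← Real.rpow_add hm0,
        show b + (a+1) = a+b+1 by ring, show a + (b+1) = a+b+1 by ring]
    ring
  rw [hsum]
  calc _ ≤ m ^ b * (m ^ (a+1) / (a+1)) + m ^ a * (m ^ (b+1) / (b+1)) := add_le_add le1 le2
  _ = (1/(a+1) + 1/(b+1)) * m ^ (a+b+1) := key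

lemma lemB {b c s T : ℝ} (hb : -1 < b) (hc : 0 < c) (hs : 0 < s) (hsT : s < T) :
    IntegrableOn (fun u : ℝ => u ^ c * (u - s) ^ b) (Ioo s T) ∧
    ∫ u in Ioo s T, u ^ c * (u - s) ^ b ≤ T ^ c * (T ^ (b+1) / (b+1)) := by
  have hT : 0 < T := lt_trans hs hsT
  have hmeasf : Measurable (fun u : ℝ => u ^ c * (u - s) ^ b) :=
    (measurable_id.pow_const c).mul ((measurable_id.sub measurable_const).pow_const b)
  have Ib : IntegrableOn (fun u : ℝ => (u - s) ^ b) (Ioc s T) := by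
    have h0 : IntervalIntegrable (fun x : ℝ => x ^ b) volume 0 (T - s) :=
      intervalIntegrable_rpow' hb
    have h1 := h0.comp_sub_right s
    rw [zero_add, sub_add_cancel] at h1
    exact (intervalIntegrable_iff_integrableOn_Ioc_of_le hsT.le).mp h1
  have hbd : ∀ u ∈ Ioo s T, u ^ c * (u - s) ^ b ≤ T ^ c * (u - s) ^ b := by
    intro u hu
    have h2 : (0:ℝ) ≤ (u - s) ^ b := Real.rpow_nonneg (by linarith [hu.1]) b
    have h3 : u ^ c ≤ T ^ c := Real.rpow_le_rpow (by linarith [hu.1, hs]) hu.2.le hc.le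
    exact mul_le_mul_of_nonneg_right h3 h2
  have hInt : IntegrableOn (fun u : ℝ => u ^ c * (u - s) ^ b) (Ioo s T) := by
    refine Integrable.mono' ((Ib.mono_set Ioo_subset_Ioc_self).const_mul (T ^ c))
      hmeasf.aestronglyMeasurable ?_
    refine (ae_restrict_iff' measurableSet_Ioo).mpr (Filter.Eventually.of_forall ?_)
    intro u hu
    have h1 : (0:ℝ) ≤ u ^ c := Real.rpow_nonneg (by linarith [hu.1]) c
    have h2 : (0:ℝ) ≤ (u - s) ^ b := Real.rpow_nonneg (by linarith [hu.1]) b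
    rw [Real.norm_eq_abs, abs_of_nonneg (mul_nonneg h1 h2)]
    exact hbd u hu
  refine ⟨hInt, ?_⟩
  have e2 : ∫ u in Ioo s T, T ^ c * (u - s) ^ b = T ^ c * ((T - s) ^ (b+1) / (b+1)) := by
    rw [MeasureTheory.integral_const_mul, ← integral_Ioc_eq_integral_Ioo,
        ← intervalIntegral.integral_of_le hsT.le]
    rw [show (∫ u in s..T, (u - s) ^ b) = ∫ x in s - s..T - s, x ^ b from
      integral_comp_sub_right (fun x : ℝ => x ^ b) s]
    rw [sub_self, integral_rpow (Or.inl hb), Real.zero_rpow (by linarith), sub_zero]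
  calc ∫ u in Ioo s T, u ^ c * (u - s) ^ b
      ≤ ∫ u in Ioo s T, T ^ c * (u - s) ^ b :=
        setIntegral_mono_on hInt ((Ib.mono_set Ioo_subset_Ioc_self).const_mul _)
          measurableSet_Ioo hbd
  _ = T ^ c * ((T - s) ^ (b+1) / (b+1)) := e2
  _ ≤ T ^ c * (T ^ (b+1) / (b+1)) := by
      have h4 : (T - s) ^ (b+1) ≤ T ^ (b+1) :=
        Real.rpow_le_rpow (by linarith) (by linarith) (by linarith)
      have h5 : (0:ℝ) ≤ T ^ c := Real.rpow_nonneg hT.le c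
      exact mul_le_mul_of_nonneg_left (div_le_div_of_nonneg_right h4 (by linarith)) h5

lemma diag_null : (volume : Measure (ℝ × ℝ)) {p : ℝ × ℝ | p.1 = p.2} = 0 := by
  have hmeas : MeasurableSet {p : ℝ × ℝ | p.1 = p.2} :=
    measurableSet_eq_fun measurable_fst measurable_snd
  rw [Measure.volume_eq_prod, Measure.prod_apply hmeas]
  have : ∀ x : ℝ, (Prod.mk x ⁻¹' {p : ℝ × ℝ | p.1 = p.2}) = {x} := by
    intro x; ext y; simp [eq_comm]
  simp [this]

end helpers

/-- If `H₂ - H₁ > 1/4`, a kernel `k₁` satisfying the standing pointwise bounds is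
square integrable on `[0,T]²`, with `‖k₁‖²_{L²} ≤ C' T^{4H₂-4H₁}`. -/
theorem kernel_L2_bound (H₁ H₂ T C : ℝ)
    (h1 : 1/2 < H₁) (h12 : H₁ < H₂) (h2 : H₂ < 1) (hgap : 1/4 < H₂ - H₁)
    (hT : 0 < T) (hC : 0 < C)
    (k₁ : ℝ → ℝ → ℝ)
    (hmeas : Measurable (fun p : ℝ × ℝ => k₁ p.1 p.2))
    (hlow : ∀ s u, 0 < s → s < u → u < T →
      0 ≤ k₁ s u ∧ k₁ s u ≤ C * u ^ (H₁ - 1/2) * s ^ (1/2 - H₁) * (u - s) ^ (2*H₂ - 2*H₁ - 1))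
    (hup : ∀ s u, 0 < u → u < s → s < T →
      0 ≤ k₁ s u ∧ k₁ s u ≤ C * s ^ (H₁ - 1/2) * u ^ (1/2 - H₁) * (s - u) ^ (2*H₂ - 2*H₁ - 1)) :
    ∃ C' > 0,
      IntegrableOn (fun p : ℝ × ℝ => (k₁ p.1 p.2) ^ 2) (Ioo 0 T ×ˢ Ioo 0 T) ∧
      ∫ p in Ioo 0 T ×ˢ Ioo 0 T, (k₁ p.1 p.2) ^ 2 ≤ C' * T ^ (4*H₂ - 4*H₁) := by
  have hH₂ : H₂ < H₁ + 1/2 := by linarith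
  set a := 1 - 2*H₁ with ha_def
  set b := 4*H₂ - 4*H₁ - 2 with hb_def
  set c := 2*H₁ - 1 with hc_def
  have ha : -1 < a := by rw [ha_def]; linarith
  have ha0 : a < 0 := by rw [ha_def]; linarith
  have hb : -1 < b := by rw [hb_def]; linarith
  have hb0 : b < 0 := by rw [hb_def]; linarith
  have hc0 : 0 < c := by rw [hc_def]; linarith
  have hac : c = -a := by rw [ha_def, hc_def]; ring
  have ha1 : 0 < a + 1 := by linarith
  have hb1 : 0 < b + 1 := by linarith
  have hb2 : 0 < b + 2 := by linarith
  have hbeq : b + 2 = 4*H₂ - 4*H₁ := by rw [hb_def]; ring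
  have hCsq : (0:ℝ) < C ^ 2 := pow_pos hC 2
  set K1 : ℝ := (1/(a+1) + 1/(b+1)) * (2:ℝ) ^ (-(a+b+1)) with hK1_def
  have hK1 : 0 < K1 := by
    apply mul_pos (add_pos (one_div_pos.mpr ha1) (one_div_pos.mpr hb1))
    exact Real.rpow_pos_of_pos (by norm_num) _
  set K2 : ℝ := T ^ c * (T ^ (b+1) / (b+1)) with hK2_def
  have hK2 : 0 < K2 := mul_pos (Real.rpow_pos_of_pos hT c)
    (div_pos (Real.rpow_pos_of_pos hT _) hb1)
  set φ : ℝ → ℝ := fun s => C^2 * K1 * s ^ (b+1) + C^2 * K2 * s ^ a with hφ_def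
  set G : ℝ × ℝ → ℝ :=
    fun p => C^2 * (max p.1 p.2 ^ c * (min p.1 p.2 ^ a * |p.2 - p.1| ^ b)) with hG_def
  have hGmeas : Measurable G := by
    apply Measurable.const_mul
    exact ((measurable_fst.max measurable_snd).pow_const c).mul
      (((measurable_fst.min measurable_snd).pow_const a).mul
        ((measurable_snd.sub measurable_fst).abs.pow_const b))
  -- pointwise bound
  have hpoint : ∀ s u : ℝ, s ∈ Ioo (0:ℝ) T → u ∈ Ioo (0:ℝ) T → s ≠ u →
      k₁ s u ^ 2 ≤ G (s, u) := by
    intro s u hs hu hne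
    rcases lt_or_gt_of_ne hne with h | h
    · obtain ⟨h0, hle⟩ := hlow s u hs.1 h hu.2
      have hstep : k₁ s u ^ 2 ≤
          (C * u ^ (H₁ - 1/2) * s ^ (1/2 - H₁) * (u - s) ^ (2*H₂ - 2*H₁ - 1)) ^ 2 :=
        pow_le_pow_left₀ h0 hle 2
      refine hstep.trans (le_of_eq ?_)
      have hus : (0:ℝ) < u - s := by linarith [h]
      show _ = C^2 * (max s u ^ c * (min s u ^ a * |u - s| ^ b))
      rw [max_eq_right h.le, min_eq_left h.le, abs_of_pos hus]
      rw [mul_pow, mul_pow, mul_pow,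
          sq_rpow' (le_of_lt hu.1), sq_rpow' (le_of_lt hs.1), sq_rpow' hus.le,
          show 2*(H₁ - 1/2) = c by rw [hc_def]; ring,
          show 2*(1/2 - H₁) = a by rw [ha_def]; ring,
          show 2*(2*H₂ - 2*H₁ - 1) = b by rw [hb_def]; ring]
      ring
    · obtain ⟨h0, hle⟩ := hup s u hu.1 h hs.2
      have hstep : k₁ s u ^ 2 ≤
          (C * s ^ (H₁ - 1/2) * u ^ (1/2 - H₁) * (s - u) ^ (2*H₂ - 2*H₁ - 1)) ^ 2 :=
        pow_le_pow_left₀ h0 hle 2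
      refine hstep.trans (le_of_eq ?_)
      have hus : (0:ℝ) < s - u := by linarith [h]
      show _ = C^2 * (max s u ^ c * (min s u ^ a * |u - s| ^ b))
      rw [max_eq_left h.le, min_eq_right h.le,
          abs_of_neg (by linarith : u - s < 0), neg_sub]
      rw [mul_pow, mul_pow, mul_pow,
          sq_rpow' (le_of_lt hs.1), sq_rpow' (le_of_lt hu.1), sq_rpow' hus.le,
          show 2*(H₁ - 1/2) = c by rw [hc_def]; ring,
          show 2*(1/2 - H₁) = a by rw [ha_def]; ring,
          show 2*(2*H₂ - 2*H₁ - 1) = b by rw [hb_def]; ring]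
      ring
  -- inner slice bound
  have inner : ∀ s ∈ Ioo (0:ℝ) T,
      ∫⁻ u in Ioo 0 T, ENNReal.ofReal (G (s, u)) ≤ ENNReal.ofReal (φ s) := by
    intro s hs
    obtain ⟨hA_int, hA_le⟩ := lemA ha ha0 hb hb0 hs.1
    obtain ⟨hB_int, hB_le⟩ := lemB hb hc0 hs.1 hs.2
    have hsplit : Ioo (0:ℝ) T = Ioo 0 s ∪ Ico s T := (Ioo_union_Ico_eq_Ioo hs.1 hs.2.le).symm
    have hdisj : Disjoint (Ioo (0:ℝ) s) (Ico s T) := by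
      rw [Set.disjoint_left]; rintro x ⟨_, h1⟩ ⟨h2, _⟩; exact absurd h2 (not_le.mpr h1)
    rw [hsplit, lintegral_union measurableSet_Ico hdisj,
        setLIntegral_congr (Ioo_ae_eq_Ico (a := s) (b := T)).symm]
    have p1 : ∫⁻ u in Ioo 0 s, ENNReal.ofReal (G (s, u))
        ≤ ENNReal.ofReal (C^2 * K1 * s ^ (b+1)) := by
      have hcong : ∀ u ∈ Ioo (0:ℝ) s,
          ENNReal.ofReal (G (s, u))
          = ENNReal.ofReal ((C^2 * s ^ c) * (u ^ a * (s - u) ^ b)) := by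
        intro u hu
        congr 1
        rw [hG_def]
        show C^2 * (max s u ^ c * (min s u ^ a * |u - s| ^ b)) = _
        rw [max_eq_left hu.2.le, min_eq_right hu.2.le,
            abs_of_neg (by linarith [hu.2] : u - s < 0), neg_sub]
        ring
      rw [setLIntegral_congr_fun measurableSet_Ioo hcong]
      rw [← ofReal_integral_eq_lintegral_ofReal (hA_int.const_mul _) ?_]
      · apply ENNReal.ofReal_le_ofReal
        rw [MeasureTheory.integral_const_mul]
        have hnn : (0:ℝ) ≤ C^2 * s ^ c := mul_nonneg hCsq.le (Real.rpow_nonneg hs.1.le c)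
        calc (C^2 * s^c) * ∫ u in Ioo 0 s, u ^ a * (s-u)^b
            ≤ (C^2 * s^c) * ((1/(a+1)+1/(b+1)) * (s/2)^(a+b+1)) :=
              mul_le_mul_of_nonneg_left hA_le hnn
          _ = C^2 * K1 * s^(b+1) := by
              have hhalf : (s/2) ^ (a+b+1) = s^(a+b+1) * (2:ℝ)^(-(a+b+1)) := by
                rw [Real.div_rpow hs.1.le (by norm_num : (0:ℝ) ≤ 2),
                    Real.rpow_neg (by norm_num : (0:ℝ) ≤ 2), div_eq_mul_inv]
              have hsc : s ^ c * s ^ (a+b+1) = s ^ (b+1) := by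
                rw [← Real.rpow_add hs.1]; congr 1; rw [hac]; ring
              rw [hhalf, hK1_def, ← hsc]; ring
      · refine (ae_restrict_iff' measurableSet_Ioo).mpr (Filter.Eventually.of_forall ?_)
        intro u hu
        have h1 : (0:ℝ) ≤ u ^ a := Real.rpow_nonneg hu.1.le a
        have h2 : (0:ℝ) ≤ (s - u) ^ b := Real.rpow_nonneg (by linarith [hu.2]) b
        exact mul_nonneg (mul_nonneg hCsq.le (Real.rpow_nonneg hs.1.le c))
          (mul_nonneg h1 h2)
    have p2 : ∫⁻ u in Ioo s T, ENNReal.ofReal (G (s, u))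
        ≤ ENNReal.ofReal (C^2 * K2 * s ^ a) := by
      have hcong : ∀ u ∈ Ioo s T,
          ENNReal.ofReal (G (s, u))
          = ENNReal.ofReal ((C^2 * s ^ a) * (u ^ c * (u - s) ^ b)) := by
        intro u hu
        congr 1
        rw [hG_def]
        show C^2 * (max s u ^ c * (min s u ^ a * |u - s| ^ b)) = _
        rw [max_eq_right hu.1.le, min_eq_left hu.1.le,
            abs_of_pos (by linarith [hu.1] : (0:ℝ) < u - s)]
        ring
      rw [setLIntegral_congr_fun measurableSet_Ioo hcong]
      rw [← ofReal_integral_eq_lintegral_ofReal (hB_int.const_mul _) ?_]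
      · apply ENNReal.ofReal_le_ofReal
        rw [MeasureTheory.integral_const_mul]
        have hnn : (0:ℝ) ≤ C^2 * s ^ a := mul_nonneg hCsq.le (Real.rpow_nonneg hs.1.le a)
        calc (C^2 * s^a) * ∫ u in Ioo s T, u ^ c * (u-s)^b
            ≤ (C^2 * s^a) * (T ^ c * (T ^ (b+1) / (b+1))) :=
              mul_le_mul_of_nonneg_left hB_le hnn
          _ = C^2 * K2 * s^a := by rw [hK2_def]; ring
      · refine (ae_restrict_iff' measurableSet_Ioo).mpr (Filter.Eventually.of_forall ?_)
        intro u hu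
        have h1 : (0:ℝ) ≤ u ^ c := Real.rpow_nonneg (by linarith [hu.1, hs.1]) c
        have h2 : (0:ℝ) ≤ (u - s) ^ b := Real.rpow_nonneg (by linarith [hu.1]) b
        exact mul_nonneg (mul_nonneg hCsq.le (Real.rpow_nonneg hs.1.le a))
          (mul_nonneg h1 h2)
    calc _ ≤ ENNReal.ofReal (C^2 * K1 * s ^ (b+1)) + ENNReal.ofReal (C^2 * K2 * s ^ a) :=
          add_le_add p1 p2
      _ = ENNReal.ofReal (φ s) := by
          rw [← ENNReal.ofReal_add
            (mul_nonneg (mul_nonneg hCsq.le hK1.le) (Real.rpow_nonneg hs.1.le _))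
            (mul_nonneg (mul_nonneg hCsq.le hK2.le) (Real.rpow_nonneg hs.1.le _))]
  -- φ integral
  have hb1' : (-1:ℝ) < b + 1 := by linarith
  have hφ_int : IntegrableOn φ (Ioo 0 T) := by
    exact ((rpow_setIntegral hb1' hT.le).1.const_mul _).add
      ((rpow_setIntegral ha hT.le).1.const_mul _)
  have hφ_nonneg : 0 ≤ᵐ[volume.restrict (Ioo (0:ℝ) T)] φ := by
    refine (ae_restrict_iff' measurableSet_Ioo).mpr (Filter.Eventually.of_forall ?_)
    intro s hs
    exact add_nonneg
      (mul_nonneg (mul_nonneg hCsq.le hK1.le) (Real.rpow_nonneg hs.1.le _))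
      (mul_nonneg (mul_nonneg hCsq.le hK2.le) (Real.rpow_nonneg hs.1.le _))
  set C' : ℝ := C^2 * K1 / (b+2) + C^2 / ((b+1)*(a+1)) with hC'_def
  have hC' : 0 < C' := add_pos (div_pos (mul_pos hCsq hK1) hb2)
    (div_pos hCsq (mul_pos hb1 ha1))
  have hφ_val : ∫ s in Ioo 0 T, φ s ≤ C' * T ^ (4*H₂ - 4*H₁) := by
    have hval : ∫ s in Ioo 0 T, φ s
        = C^2 * K1 * (T^(b+1+1)/(b+1+1)) + C^2 * K2 * (T^(a+1)/(a+1)) := by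
      rw [hφ_def]
      rw [integral_add ((rpow_setIntegral hb1' hT.le).1.const_mul _)
        ((rpow_setIntegral ha hT.le).1.const_mul _)]
      rw [MeasureTheory.integral_const_mul, MeasureTheory.integral_const_mul,
          (rpow_setIntegral hb1' hT.le).2, (rpow_setIntegral ha hT.le).2]
    rw [hval]
    have hTT : T^c * T^(b+1) * T^(a+1) = T^(b+2) := by
      rw [← Real.rpow_add hT, ← Real.rpow_add hT]; congr 1; rw [hac]; ring
    have : C^2 * K1 * (T^(b+1+1)/(b+1+1)) + C^2 * K2 * (T^(a+1)/(a+1))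
        = C' * T^(b+2) := by
      rw [hK2_def, hC'_def, show b+1+1 = b+2 by ring, ← hTT]
      field_simp
    rw [this, hbeq]
  -- main lintegral bound
  have hboxm : MeasurableSet (Ioo (0:ℝ) T ×ˢ Ioo (0:ℝ) T) :=
    measurableSet_Ioo.prod measurableSet_Ioo
  have hdiag_ae : ∀ᵐ p : ℝ × ℝ, p.1 ≠ p.2 := by
    rw [ae_iff]
    have : {p : ℝ × ℝ | ¬ p.1 ≠ p.2} = {p : ℝ × ℝ | p.1 = p.2} := by ext p; simp
    rw [this]; exact diag_null
  have main : ∫⁻ p in Ioo (0:ℝ) T ×ˢ Ioo (0:ℝ) T, ENNReal.ofReal ((k₁ p.1 p.2)^2)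
      ≤ ENNReal.ofReal (C' * T ^ (4*H₂ - 4*H₁)) := by
    have step1 : ∫⁻ p in Ioo (0:ℝ) T ×ˢ Ioo (0:ℝ) T, ENNReal.ofReal ((k₁ p.1 p.2)^2)
        ≤ ∫⁻ p in Ioo (0:ℝ) T ×ˢ Ioo (0:ℝ) T, ENNReal.ofReal (G p) := by
      refine lintegral_mono_ae ?_
      filter_upwards [ae_restrict_of_ae hdiag_ae, ae_restrict_mem hboxm] with p hne hmem
      exact ENNReal.ofReal_le_ofReal (hpoint p.1 p.2 hmem.1 hmem.2 hne)
    refine step1.trans ?_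
    rw [Measure.volume_eq_prod, ← Measure.prod_restrict,
        lintegral_prod _ hGmeas.ennreal_ofReal.aemeasurable]
    calc ∫⁻ s in Ioo (0:ℝ) T, ∫⁻ u in Ioo (0:ℝ) T, ENNReal.ofReal (G (s, u))
        ≤ ∫⁻ s in Ioo (0:ℝ) T, ENNReal.ofReal (φ s) :=
          lintegral_mono_ae ((ae_restrict_iff' measurableSet_Ioo).mpr
            (Filter.Eventually.of_forall inner))
      _ = ENNReal.ofReal (∫ s in Ioo 0 T, φ s) :=
          (ofReal_integral_eq_lintegral_ofReal hφ_int hφ_nonneg).symm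
      _ ≤ ENNReal.ofReal (C' * T ^ (4*H₂ - 4*H₁)) := ENNReal.ofReal_le_ofReal hφ_val
  have hfmeas : AEStronglyMeasurable (fun p : ℝ × ℝ => (k₁ p.1 p.2) ^ 2)
      (volume.restrict (Ioo (0:ℝ) T ×ˢ Ioo (0:ℝ) T)) :=
    ((hmeas.pow_const 2).aestronglyMeasurable)
  refine ⟨C', hC', ?_, ?_⟩
  · refine ⟨hfmeas, ?_⟩
    rw [hasFiniteIntegral_iff_ofReal (Filter.Eventually.of_forall (fun p => sq_nonneg _))]
    exact lt_of_le_of_lt main ENNReal.ofReal_lt_top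
  · rw [integral_eq_lintegral_of_nonneg_ae
      (Filter.Eventually.of_forall (fun p => sq_nonneg _)) hfmeas]
    refine ENNReal.toReal_le_of_le_ofReal ?_ main
    exact mul_nonneg hC'.le (Real.rpow_nonneg hT.le _)
end

section
/- Fractional integration by parts: for α ∈ (0,1) and suitable functions f, g on [a,b] (e.g. f with 𝒟^α_{a+} f ∈ L^p, g with 𝒟^α_{b-} g ∈ L^q, 1/p + 1/q ≤ 1 + α), one has ∫ₐᵇ (𝒟^α_{a+} f)(x) g(x) dx = ∫ₐᵇ f(x) (𝒟^α_{b-} g)(x) dx. -/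
open MeasureTheory intervalIntegral Real Set Filter Metric Topology

namespace FIBP

/-- integrability of `(t-c)^r` on `[c,d]` -/
lemma int_left {r : ℝ} (hr : -1 < r) (c d : ℝ) :
    IntervalIntegrable (fun t => (t - c) ^ r) volume c d := by
  simpa using (intervalIntegral.intervalIntegrable_rpow' (a := 0) (b := d - c) hr).comp_sub_right c

lemma int_right {r : ℝ} (hr : -1 < r) (c d : ℝ) :
    IntervalIntegrable (fun t => (d - t) ^ r) volume c d := by
  simpa using ((intervalIntegral.intervalIntegrable_rpow' (a := d - c) (b := 0) hr).comp_sub_left d)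

lemma val_left {α : ℝ} (hα1 : 0 < α) (c d : ℝ) :
    ∫ t in c..d, (t - c) ^ (α - 1) = (d - c) ^ α / α := by
  have h := intervalIntegral.integral_comp_sub_right (a := c) (b := d) (fun u => u ^ (α - 1)) c
  rw [h]
  rw [integral_rpow (Or.inl (by linarith))]
  rw [sub_self, Real.zero_rpow (by linarith : α - 1 + 1 ≠ 0)]
  rw [sub_add_cancel]
  ring

lemma val_right {α : ℝ} (hα1 : 0 < α) (c d : ℝ) :
    ∫ t in c..d, (d - t) ^ (α - 1) = (d - c) ^ α / α := by
  have h := intervalIntegral.integral_comp_sub_left (a := c) (b := d) (fun u => u ^ (α - 1)) d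
  rw [h]
  rw [integral_rpow (Or.inl (by linarith))]
  rw [sub_self, Real.zero_rpow (by linarith : α - 1 + 1 ≠ 0)]
  rw [sub_add_cancel]
  ring


lemma beta_integrable {α : ℝ} (hα1 : 0 < α) (hα2 : α < 1) :
    IntervalIntegrable (fun x : ℝ => x ^ (α - 1) * (1 - x) ^ (-α)) volume 0 1 := by
  have h1 : (0:ℝ) < ((α : ℂ)).re := by simpa using hα1
  have h2 : (0:ℝ) < (((1 - α : ℝ) : ℂ)).re := by simpa using (by linarith : (0:ℝ) < 1 - α)
  have hc := (Complex.betaIntegral_convergent h1 h2).norm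
  apply hc.congr
  have hi : Set.uIoc (0:ℝ) 1 = Set.Ioc 0 1 := Set.uIoc_of_le (by norm_num)
  rw [hi]
  intro x hx
  dsimp only
  have hx0 : 0 < x := hx.1
  have hre1 : ((α : ℂ) - 1).re = α - 1 := by simp
  have hre2 : ((((1 - α : ℝ)) : ℂ) - 1).re = -α := by simp
  rcases hx.2.eq_or_lt with h | h
  · subst h
    have hz : ((1:ℂ) - (1:ℝ)) = 0 := by norm_num
    have hw : ((((1 - α : ℝ)) : ℂ) - 1) ≠ 0 := by
      intro hcon
      have : (((1 - α : ℝ)) : ℂ) = ((1:ℝ) : ℂ) := by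
        push_cast at hcon ⊢; linear_combination hcon
      have := Complex.ofReal_inj.1 this
      linarith
    rw [hz, Complex.zero_cpow hw]
    norm_num [Real.zero_rpow (by linarith : -α ≠ 0)]
  · rw [norm_mul]
    rw [Complex.norm_cpow_eq_rpow_re_of_pos hx0]
    rw [show (1:ℂ) - (x:ℂ) = ((1 - x : ℝ) : ℂ) by push_cast; ring]
    rw [Complex.norm_cpow_eq_rpow_re_of_pos (by linarith), hre1, hre2]

lemma beta_value {α : ℝ} (hα1 : 0 < α) (hα2 : α < 1) :
    ∫ x in (0:ℝ)..1, x ^ (α - 1) * (1 - x) ^ (-α) = Real.Gamma α * Real.Gamma (1 - α) := by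
  have h1 : (0:ℝ) < ((α : ℂ)).re := by simpa using hα1
  have h2 : (0:ℝ) < (((1 - α : ℝ) : ℂ)).re := by simpa using (by linarith : (0:ℝ) < 1 - α)
  have key := Complex.Gamma_mul_Gamma_eq_betaIntegral h1 h2
  have hsum : ((α : ℂ)) + ((1 - α : ℝ) : ℂ) = 1 := by push_cast; ring
  rw [hsum, Complex.Gamma_one, one_mul] at key
  have hcb : Complex.betaIntegral (α : ℂ) ((1 - α : ℝ) : ℂ)
      = ((∫ x in (0:ℝ)..1, x ^ (α - 1) * (1 - x) ^ (-α) : ℝ) : ℂ) := by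
    rw [Complex.betaIntegral, ← intervalIntegral.integral_ofReal]
    apply intervalIntegral.integral_congr_ae
    have hi : Set.uIoc (0:ℝ) 1 = Set.Ioc 0 1 := Set.uIoc_of_le (by norm_num)
    rw [hi]
    filter_upwards [] with x hx
    have hx0 : 0 < x := hx.1
    rcases hx.2.eq_or_lt with h | h
    · subst h
      have hz : ((1:ℂ) - (1:ℝ)) = 0 := by norm_num
      have hw : ((((1 - α : ℝ)) : ℂ) - 1) ≠ 0 := by
        intro hcon
        have : (((1 - α : ℝ)) : ℂ) = ((1:ℝ) : ℂ) := by
          push_cast at hcon ⊢; linear_combination hcon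
        have := Complex.ofReal_inj.1 this
        linarith
      rw [hz, Complex.zero_cpow hw]
      norm_num [Real.zero_rpow (by linarith : -α ≠ 0)]
    · have e1 : ((x ^ (α - 1) : ℝ) : ℂ) = (x:ℂ) ^ ((α:ℂ) - 1) := by
        rw [Complex.ofReal_cpow hx0.le]; norm_cast
      have e2 : (((1 - x) ^ (-α) : ℝ) : ℂ) = ((1:ℂ) - (x:ℂ)) ^ ((((1 - α : ℝ)) : ℂ) - 1) := by
        rw [Complex.ofReal_cpow (by linarith : (0:ℝ) ≤ 1 - x)]
        congr 1 <;> push_cast <;> ring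
      rw [Complex.ofReal_mul, e1, e2]
  rw [hcb, Complex.Gamma_ofReal, Complex.Gamma_ofReal, ← Complex.ofReal_mul] at key
  exact_mod_cast key.symm

lemma kernel_integrable {α : ℝ} (hα1 : 0 < α) (hα2 : α < 1) {s y : ℝ} (hsy : s < y) :
    IntervalIntegrable (fun t => (t - s) ^ (α - 1) * (y - t) ^ (-α)) volume s y := by
  have h0 : (0:ℝ) < y - s := by linarith
  have h1 := (beta_integrable hα1 hα2).comp_mul_left (c := (y - s)⁻¹)
  rw [show (0:ℝ) / (y - s)⁻¹ = 0 by simp, show (1:ℝ) / (y - s)⁻¹ = y - s by field_simp] at h1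
  have h2 := h1.comp_sub_right s
  rw [zero_add, sub_add_cancel] at h2
  apply (h2.const_mul (y - s)⁻¹).congr
  have hi : Set.uIoc s y = Set.Ioc s y := Set.uIoc_of_le hsy.le
  rw [hi]
  intro t ht
  have hts : 0 < t - s := by simp only [Set.mem_Ioc] at ht; linarith [ht.1]
  have hty : 0 ≤ y - t := by simp only [Set.mem_Ioc] at ht; linarith [ht.2]
  show (y - s)⁻¹ * (((y - s)⁻¹ * (t - s)) ^ (α - 1) * (1 - (y - s)⁻¹ * (t - s)) ^ (-α))
      = (t - s) ^ (α - 1) * (y - t) ^ (-α)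
  have hu : (y - s)⁻¹ * (t - s) = (t - s) / (y - s) := by ring
  rw [hu]
  rcases hty.eq_or_lt with h | h
  · have hyt : t = y := by linarith
    subst hyt
    rw [div_self (ne_of_gt h0)]
    norm_num [Real.zero_rpow (by linarith : -α ≠ 0), Real.zero_rpow (by linarith : α - 1 ≠ 0)]
  · have e1 : (1 - (t - s) / (y - s)) = (y - t) / (y - s) := by field_simp; ring
    rw [e1, Real.div_rpow hts.le h0.le, Real.div_rpow (by linarith) h0.le]
    rw [← Real.rpow_neg_one (y - s)]
    rw [show (-1 : ℝ) = (α - 1) + (-α) by ring, Real.rpow_add h0]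
    field_simp

lemma kernel_value {α : ℝ} (hα1 : 0 < α) (hα2 : α < 1) {s y : ℝ} (hsy : s < y) :
    ∫ t in s..y, (t - s) ^ (α - 1) * (y - t) ^ (-α) = Real.Gamma α * Real.Gamma (1 - α) := by
  have h0 : (0:ℝ) < y - s := by linarith
  have key := intervalIntegral.integral_comp_mul_add (a := (0:ℝ)) (b := 1)
      (fun t => (t - s) ^ (α - 1) * (y - t) ^ (-α)) (ne_of_gt h0) s
  rw [mul_zero, zero_add, mul_one, sub_add_cancel] at key
  have lhs_eq : ∫ x in (0:ℝ)..1, ((y - s) * x + s - s) ^ (α - 1) * (y - ((y - s) * x + s)) ^ (-α)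
      = (y - s)⁻¹ * ∫ x in (0:ℝ)..1, x ^ (α - 1) * (1 - x) ^ (-α) := by
    rw [← intervalIntegral.integral_const_mul]
    apply intervalIntegral.integral_congr
    intro x hx
    rw [Set.uIcc_of_le (by norm_num : (0:ℝ) ≤ 1)] at hx
    have hx0 : 0 ≤ x := hx.1
    have hx1 : x ≤ 1 := hx.2
    have e0 : (y - s) * x + s - s = (y - s) * x := by ring
    have e1 : y - ((y - s) * x + s) = (y - s) * (1 - x) := by ring
    simp only []
    rw [e0, e1, Real.mul_rpow h0.le hx0, Real.mul_rpow h0.le (by linarith)]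
    rw [show (y - s) ^ (α - 1) * x ^ (α - 1) * ((y - s) ^ (-α) * (1 - x) ^ (-α))
        = ((y - s) ^ (α - 1) * (y - s) ^ (-α)) * (x ^ (α - 1) * (1 - x) ^ (-α)) by ring]
    rw [← Real.rpow_add h0, show α - 1 + -α = -1 by ring, Real.rpow_neg_one]
  rw [lhs_eq, beta_value hα1 hα2, smul_eq_mul] at key
  have := mul_left_cancel₀ (inv_ne_zero (ne_of_gt h0)) key
  exact this.symm

/-- a.e. fundamental theorem of calculus for indefinite integrals of integrable functions -/
lemma ae_ftc {φ : ℝ → ℝ} (hφ : Integrable φ volume) (a : ℝ) :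
    ∀ᵐ x ∂(volume : Measure ℝ), HasDerivAt (fun y => ∫ t in a..y, φ t) (φ x) x := by
  filter_upwards [IsUnifLocDoublingMeasure.ae_tendsto_average_norm_sub (μ := volume)
    (hφ.locallyIntegrable) 1] with x hx
  rw [hasDerivAt_iff_tendsto_slope]
  have hA : Tendsto (fun y => ⨍ t in closedBall x |y - x|, ‖φ t - φ x‖) (𝓝[≠] x) (𝓝 0) := by
    apply hx (fun _ => x) (fun y => |y - x|)
    · rw [tendsto_nhdsWithin_iff]
      constructor
      · have : Tendsto (fun y : ℝ => |y - x|) (𝓝 x) (𝓝 |x - x|) :=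
          ((continuous_id.sub continuous_const).abs).continuousAt
        simpa using this.mono_left nhdsWithin_le_nhds
      · filter_upwards [self_mem_nhdsWithin] with y hy
        exact abs_pos.2 (sub_ne_zero.2 hy)
    · filter_upwards with y
      simp
  rw [tendsto_iff_norm_sub_tendsto_zero]
  apply squeeze_zero' (Eventually.of_forall fun y => norm_nonneg _)
    ?_ (by simpa using hA.const_mul 2)
  filter_upwards [self_mem_nhdsWithin] with y hy
  have hyx : y ≠ x := hy
  have habs : (0:ℝ) < |y - x| := abs_pos.2 (sub_ne_zero.2 hyx)
  -- slope computation
  have hii : ∀ u v : ℝ, IntervalIntegrable φ volume u v := fun u v => hφ.intervalIntegrable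
  have e1 : (∫ t in a..y, φ t) - ∫ t in a..x, φ t = ∫ t in x..y, φ t := by
    rw [← intervalIntegral.integral_add_adjacent_intervals (hii a x) (hii x y)]
    ring
  have e2 : slope (fun y => ∫ t in a..y, φ t) x y - φ x
      = (y - x)⁻¹ * ∫ t in x..y, (φ t - φ x) := by
    rw [slope_def_field]
    rw [intervalIntegral.integral_sub (hii x y) (intervalIntegrable_const)]
    rw [intervalIntegral.integral_const, e1, smul_eq_mul]
    rw [div_eq_inv_mul, mul_sub]
    congr 1
    rw [← mul_assoc, inv_mul_cancel₀ (sub_ne_zero.2 hyx), one_mul]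
  rw [e2]
  have hsub : Set.uIoc x y ⊆ closedBall x |y - x| := by
    intro t ht
    rw [Real.closedBall_eq_Icc]
    rw [Set.mem_Icc]
    rcases le_total x y with h | h
    · rw [Set.uIoc_of_le h] at ht
      rw [abs_of_nonneg (by linarith)]
      exact ⟨by linarith [ht.1], by linarith [ht.2]⟩
    · rw [Set.uIoc_of_ge h] at ht
      rw [abs_of_nonpos (by linarith)]
      exact ⟨by linarith [ht.1], by linarith [ht.2]⟩
  have hbound : ‖∫ t in x..y, (φ t - φ x)‖ ≤ ∫ t in closedBall x |y - x|, ‖φ t - φ x‖ := by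
    refine (intervalIntegral.norm_integral_le_integral_norm_uIoc).trans ?_
    apply setIntegral_mono_set
    · refine ((hφ.integrableOn.sub ?_).norm)
      exact integrableOn_const (by rw [Real.volume_closedBall]; exact ENNReal.ofReal_ne_top)
    · filter_upwards with t using norm_nonneg _
    · exact HasSubset.Subset.eventuallyLE hsub
  have havg : ∫ t in closedBall x |y - x|, ‖φ t - φ x‖
      = (2 * |y - x|) * ⨍ t in closedBall x |y - x|, ‖φ t - φ x‖ := by
    rw [setAverage_eq (volume : Measure ℝ) (fun t => ‖φ t - φ x‖) (closedBall x |y - x|),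
      smul_eq_mul]
    rw [Real.volume_real_closedBall (by positivity)]
    rw [← mul_assoc, mul_inv_cancel₀ (by positivity), one_mul]
  rw [norm_mul, norm_inv, Real.norm_eq_abs (y - x)]
  calc |y - x|⁻¹ * ‖∫ t in x..y, (φ t - φ x)‖
      ≤ |y - x|⁻¹ * ((2 * |y - x|) * ⨍ t in closedBall x |y - x|, ‖φ t - φ x‖) := by
        apply mul_le_mul_of_nonneg_left _ (by positivity)
        rw [← havg]
        exact hbound
    _ = 2 * ⨍ t in closedBall x |y - x|, ‖φ t - φ x‖ := by
        rw [show |y - x|⁻¹ * ((2 * |y - x|) * ⨍ t in closedBall x |y - x|, ‖φ t - φ x‖)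
            = (|y - x|⁻¹ * |y - x|) * (2 * ⨍ t in closedBall x |y - x|, ‖φ t - φ x‖) by ring]
        rw [inv_mul_cancel₀ (ne_of_gt habs), one_mul]

lemma ae_ne_restrict {y : ℝ} (s : Set ℝ) : ∀ᵐ x ∂(volume.restrict s), x ≠ y := by
  apply ae_restrict_of_ae
  rw [ae_iff]
  simp only [ne_eq, not_not, Set.setOf_eq_eq_singleton]
  exact Real.volume_singleton

lemma semigroup {α : ℝ} (hα1 : 0 < α) (hα2 : α < 1) {a y : ℝ} (hay : a < y)
    {φ : ℝ → ℝ} (hφ : IntegrableOn φ (Set.Ioc a y) volume) :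
    ∫ t in a..y, (∫ s in a..t, φ s * (t - s) ^ (α - 1)) * (y - t) ^ (-α)
      = (Real.Gamma α * Real.Gamma (1 - α)) * ∫ s in a..y, φ s := by
  have hB : 0 < Real.Gamma α * Real.Gamma (1 - α) :=
    mul_pos (Real.Gamma_pos_of_pos hα1) (Real.Gamma_pos_of_pos (by linarith))
  set B := Real.Gamma α * Real.Gamma (1 - α) with hBdef
  set U : ℝ × ℝ → ℝ := fun p =>
    ({q : ℝ × ℝ | q.2 < q.1}.indicator
      (fun q => φ q.2 * ((q.1 - q.2) ^ (α - 1) * (y - q.1) ^ (-α)))) p with hUdef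
  have hU2 : ∀ t s : ℝ, U (t, s)
      = Set.indicator (Set.Ioi s) (fun t => φ s * ((t - s) ^ (α - 1) * (y - t) ^ (-α))) t := by
    intro t s
    by_cases h : s < t <;> simp [hUdef, Set.indicator, h]
  have hφm : AEStronglyMeasurable φ (volume.restrict (Set.Ioc a y)) := hφ.aestronglyMeasurable
  have hkm : Measurable fun q : ℝ × ℝ => (q.1 - q.2) ^ (α - 1) * (y - q.1) ^ (-α) := by
    measurability
  have hSm : MeasurableSet {q : ℝ × ℝ | q.2 < q.1} := measurableSet_lt measurable_snd measurable_fst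
  have hUm : AEStronglyMeasurable U
      ((volume.restrict (Set.Ioc a y)).prod (volume.restrict (Set.Ioc a y))) := by
    exact ((hφm.comp_snd).mul hkm.aestronglyMeasurable).indicator hSm
  -- integrability of kernel slices
  have hker : ∀ s ∈ Set.Ioo a y,
      IntegrableOn (fun t => (t - s) ^ (α - 1) * (y - t) ^ (-α)) (Set.Ioc s y) volume := by
    intro s hs
    have h := kernel_integrable hα1 hα2 hs.2
    rw [intervalIntegrable_iff, Set.uIoc_of_le hs.2.le] at h
    exact h
  -- a.e. membership in Ioo a y
  have haeIoo : ∀ᵐ s ∂(volume.restrict (Set.Ioc a y)), s ∈ Set.Ioo a y := by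
    filter_upwards [ae_restrict_mem measurableSet_Ioc, ae_ne_restrict (y := y) (Set.Ioc a y)]
      with s hs hne
    exact ⟨hs.1, lt_of_le_of_ne hs.2 hne⟩
  -- value of the t-integral of ‖U‖ and of U
  have houter : ∀ s ∈ Set.Ioo a y,
      ∫ t, U (t, s) ∂(volume.restrict (Set.Ioc a y)) = φ s * B := by
    intro s hs
    have hfun : (fun t => U (t, s))
        = Set.indicator (Set.Ioi s) (fun t => φ s * ((t - s) ^ (α - 1) * (y - t) ^ (-α))) :=
      funext fun t => hU2 t s
    rw [hfun, MeasureTheory.integral_indicator measurableSet_Ioi,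
      Measure.restrict_restrict measurableSet_Ioi]
    have hset : Set.Ioi s ∩ Set.Ioc a y = Set.Ioc s y := by
      ext z
      simp only [Set.mem_inter_iff, Set.mem_Ioi, Set.mem_Ioc]
      constructor
      · rintro ⟨h1, _, h3⟩; exact ⟨h1, h3⟩
      · rintro ⟨h1, h2⟩; exact ⟨h1, lt_trans hs.1 h1, h2⟩
    rw [hset, MeasureTheory.integral_const_mul, ← intervalIntegral.integral_of_le hs.2.le,
      kernel_value hα1 hα2 hs.2]
  have houternorm : ∀ s ∈ Set.Ioo a y,
      ∫ t, ‖U (t, s)‖ ∂(volume.restrict (Set.Ioc a y)) = ‖φ s‖ * B := by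
    intro s hs
    have hcong : ∫ t, ‖U (t, s)‖ ∂(volume.restrict (Set.Ioc a y))
        = ∫ t, Set.indicator (Set.Ioi s)
            (fun t => ‖φ s‖ * ((t - s) ^ (α - 1) * (y - t) ^ (-α))) t
            ∂(volume.restrict (Set.Ioc a y)) := by
      apply MeasureTheory.integral_congr_ae
      filter_upwards [ae_restrict_mem measurableSet_Ioc] with t ht
      rw [hU2 t s]
      by_cases h : s < t
      · rw [Set.indicator_of_mem (Set.mem_Ioi.2 h), Set.indicator_of_mem (Set.mem_Ioi.2 h),
          norm_mul]
        congr 1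
        rw [Real.norm_eq_abs]
        apply abs_of_nonneg
        exact mul_nonneg (Real.rpow_nonneg (by linarith) _) (Real.rpow_nonneg (by linarith [ht.2]) _)
      · rw [Set.indicator_of_notMem (fun hc => h (Set.mem_Ioi.1 hc)),
          Set.indicator_of_notMem (fun hc => h (Set.mem_Ioi.1 hc)), norm_zero]
    rw [hcong, MeasureTheory.integral_indicator measurableSet_Ioi,
      Measure.restrict_restrict measurableSet_Ioi]
    have hset : Set.Ioi s ∩ Set.Ioc a y = Set.Ioc s y := by
      ext z
      simp only [Set.mem_inter_iff, Set.mem_Ioi, Set.mem_Ioc]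
      constructor
      · rintro ⟨h1, _, h3⟩; exact ⟨h1, h3⟩
      · rintro ⟨h1, h2⟩; exact ⟨h1, lt_trans hs.1 h1, h2⟩
    rw [hset, MeasureTheory.integral_const_mul, ← intervalIntegral.integral_of_le hs.2.le,
      kernel_value hα1 hα2 hs.2]
  -- integrability on the product
  have hInt : Integrable U
      ((volume.restrict (Set.Ioc a y)).prod (volume.restrict (Set.Ioc a y))) := by
    rw [integrable_prod_iff' hUm]
    constructor
    · filter_upwards [haeIoo] with s hs
      have hfun : (fun t => U (t, s))
          = Set.indicator (Set.Ioi s) (fun t => φ s * ((t - s) ^ (α - 1) * (y - t) ^ (-α))) :=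
        funext fun t => hU2 t s
      rw [hfun]
      apply MeasureTheory.IntegrableOn.integrable_indicator _ measurableSet_Ioi
      rw [IntegrableOn, Measure.restrict_restrict measurableSet_Ioi]
      have hset : Set.Ioi s ∩ Set.Ioc a y = Set.Ioc s y := by
        ext z
        simp only [Set.mem_inter_iff, Set.mem_Ioi, Set.mem_Ioc]
        constructor
        · rintro ⟨h1, _, h3⟩; exact ⟨h1, h3⟩
        · rintro ⟨h1, h2⟩; exact ⟨h1, lt_trans hs.1 h1, h2⟩
      rw [hset]
      exact (hker s hs).const_mul (φ s)
    · apply Integrable.mono' (hφ.norm.mul_const B) ((hUm.norm.prod_swap).integral_prod_right')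
      filter_upwards [haeIoo] with s hs
      show ‖∫ t, ‖U (t, s)‖ ∂(volume.restrict (Set.Ioc a y))‖ ≤ ‖φ s‖ * B
      rw [houternorm s hs, Real.norm_eq_abs,
        abs_of_nonneg (mul_nonneg (norm_nonneg _) hB.le)]
  -- Fubini
  have hswap := MeasureTheory.integral_integral_swap (f := fun t s => U (t, s)) hInt
  -- left side: identify with the target LHS
  have hLHS : ∫ t in a..y, (∫ s in a..t, φ s * (t - s) ^ (α - 1)) * (y - t) ^ (-α)
      = ∫ t, (∫ s, U (t, s) ∂(volume.restrict (Set.Ioc a y))) ∂(volume.restrict (Set.Ioc a y)) := by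
    rw [intervalIntegral.integral_of_le hay.le]
    apply setIntegral_congr_fun measurableSet_Ioc
    intro t ht
    dsimp only
    have hfun : (fun s => U (t, s))
        = fun s => (Set.indicator (Set.Iio t) (fun s => φ s * (t - s) ^ (α - 1)) s)
            * (y - t) ^ (-α) := by
      funext s
      by_cases h : s < t
      · simp only [hUdef, Set.indicator, Set.mem_setOf_eq, h, if_true, Set.mem_Iio]
        ring
      · simp only [hUdef, Set.indicator, Set.mem_setOf_eq, h, if_false, Set.mem_Iio, zero_mul]
    rw [hfun, MeasureTheory.integral_mul_const]
    congr 1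
    rw [MeasureTheory.integral_indicator measurableSet_Iio, Measure.restrict_restrict measurableSet_Iio]
    have hset : Set.Iio t ∩ Set.Ioc a y = Set.Ioo a t := by
      ext z
      simp only [Set.mem_inter_iff, Set.mem_Iio, Set.mem_Ioc, Set.mem_Ioo]
      constructor
      · rintro ⟨h1, h2, _⟩; exact ⟨h2, h1⟩
      · rintro ⟨h1, h2⟩; exact ⟨h2, h1, le_trans h2.le ht.2⟩
    rw [hset, ← integral_Ioc_eq_integral_Ioo, ← intervalIntegral.integral_of_le ht.1.le]
  -- right side
  have hRHS : ∫ s, (∫ t, U (t, s) ∂(volume.restrict (Set.Ioc a y))) ∂(volume.restrict (Set.Ioc a y))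
      = B * ∫ s in a..y, φ s := by
    rw [intervalIntegral.integral_of_le hay.le]
    have : ∫ s, (∫ t, U (t, s) ∂(volume.restrict (Set.Ioc a y))) ∂(volume.restrict (Set.Ioc a y))
        = ∫ s, φ s * B ∂(volume.restrict (Set.Ioc a y)) := by
      apply MeasureTheory.integral_congr_ae
      filter_upwards [haeIoo] with s hs
      exact houter s hs
    rw [this, MeasureTheory.integral_mul_const, mul_comm]
  rw [hLHS, hswap, hRHS]


lemma main_swap {α : ℝ} (hα1 : 0 < α) (hα2 : α < 1) {a b : ℝ} (hab : a < b)
    {φ ψ : ℝ → ℝ} (hφm : AEStronglyMeasurable φ (volume.restrict (Set.Ioc a b)))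
    (hψm : AEStronglyMeasurable ψ (volume.restrict (Set.Ioc a b)))
    (hφsq : Integrable (fun x => φ x ^ 2) (volume.restrict (Set.Ioc a b)))
    (hψsq : Integrable (fun x => ψ x ^ 2) (volume.restrict (Set.Ioc a b))) :
    ∫ x in a..b, φ x * ∫ t in x..b, ψ t * (t - x) ^ (α - 1)
      = ∫ t in a..b, (∫ x in a..t, φ x * (t - x) ^ (α - 1)) * ψ t := by
  set C := (b - a) ^ α / α with hCdef
  have hC0 : 0 ≤ C := div_nonneg (Real.rpow_nonneg (by linarith) _) hα1.le
  set S : Set (ℝ × ℝ) := {q : ℝ × ℝ | q.1 < q.2} with hSdef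
  have hSm : MeasurableSet S := measurableSet_lt measurable_fst measurable_snd
  have hkm : Measurable fun q : ℝ × ℝ => (q.2 - q.1) ^ (α - 1) := by measurability
  set K : ℝ × ℝ → ℝ := S.indicator (fun q => (q.2 - q.1) ^ (α - 1)) with hKdef
  have hKm : Measurable K := hkm.indicator hSm
  set W : ℝ × ℝ → ℝ := S.indicator (fun q => φ q.1 * ψ q.2 * (q.2 - q.1) ^ (α - 1)) with hWdef
  have hWm : AEStronglyMeasurable W
      ((volume.restrict (Set.Ioc a b)).prod (volume.restrict (Set.Ioc a b))) :=
    ((hφm.comp_fst.mul hψm.comp_snd).mul hkm.aestronglyMeasurable).indicator hSm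
  -- dominator 1
  have dom1 : Integrable (fun p : ℝ × ℝ => φ p.1 ^ 2 * K p)
      ((volume.restrict (Set.Ioc a b)).prod (volume.restrict (Set.Ioc a b))) := by
    have hm : AEStronglyMeasurable (fun p : ℝ × ℝ => φ p.1 ^ 2 * K p)
        ((volume.restrict (Set.Ioc a b)).prod (volume.restrict (Set.Ioc a b))) :=
      (hφsq.aestronglyMeasurable.comp_fst).mul hKm.aestronglyMeasurable
    rw [integrable_prod_iff hm]
    constructor
    · filter_upwards [ae_restrict_mem measurableSet_Ioc] with x hx
      have hfun : (fun t => φ x ^ 2 * K (x, t))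
          = Set.indicator (Set.Ioi x) (fun t => φ x ^ 2 * (t - x) ^ (α - 1)) := by
        funext t
        by_cases h : x < t
        · rw [Set.indicator_of_mem (Set.mem_Ioi.2 h)]
          rw [hKdef, Set.indicator_of_mem (show ((x, t) : ℝ × ℝ) ∈ S from h)]
        · rw [Set.indicator_of_notMem (fun hc => h (Set.mem_Ioi.1 hc))]
          rw [hKdef, Set.indicator_of_notMem (show ((x, t) : ℝ × ℝ) ∉ S from h), mul_zero]
      rw [hfun]
      apply MeasureTheory.IntegrableOn.integrable_indicator _ measurableSet_Ioi
      rw [IntegrableOn, Measure.restrict_restrict measurableSet_Ioi]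
      have hset : Set.Ioi x ∩ Set.Ioc a b = Set.Ioc x b := by
        ext z
        simp only [Set.mem_inter_iff, Set.mem_Ioi, Set.mem_Ioc]
        constructor
        · rintro ⟨h1, _, h3⟩; exact ⟨h1, h3⟩
        · rintro ⟨h1, h2⟩; exact ⟨h1, lt_trans hx.1 h1, h2⟩
      rw [hset]
      have := (int_left (by linarith : (-1:ℝ) < α - 1) x b)
      rw [intervalIntegrable_iff, Set.uIoc_of_le hx.2] at this
      exact this.const_mul _
    · apply Integrable.mono' (hφsq.mul_const C) (hm.norm.integral_prod_right')
      filter_upwards [ae_restrict_mem measurableSet_Ioc] with x hx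
      have hval : ∫ t, ‖φ x ^ 2 * K (x, t)‖ ∂(volume.restrict (Set.Ioc a b))
          = φ x ^ 2 * ((b - x) ^ α / α) := by
        have hcong : ∀ t, ‖φ x ^ 2 * K (x, t)‖
            = Set.indicator (Set.Ioi x) (fun t => φ x ^ 2 * (t - x) ^ (α - 1)) t := by
          intro t
          by_cases h : x < t
          · rw [Set.indicator_of_mem (Set.mem_Ioi.2 h)]
            rw [hKdef, Set.indicator_of_mem (show ((x, t) : ℝ × ℝ) ∈ S from h)]
            rw [Real.norm_eq_abs]
            exact abs_of_nonneg (mul_nonneg (sq_nonneg _) (Real.rpow_nonneg (by linarith) _))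
          · rw [Set.indicator_of_notMem (fun hc => h (Set.mem_Ioi.1 hc))]
            rw [hKdef, Set.indicator_of_notMem (show ((x, t) : ℝ × ℝ) ∉ S from h), mul_zero,
              norm_zero]
        rw [MeasureTheory.integral_congr_ae (Eventually.of_forall hcong)]
        rw [MeasureTheory.integral_indicator measurableSet_Ioi,
          Measure.restrict_restrict measurableSet_Ioi]
        have hset : Set.Ioi x ∩ Set.Ioc a b = Set.Ioc x b := by
          ext z
          simp only [Set.mem_inter_iff, Set.mem_Ioi, Set.mem_Ioc]
          constructor
          · rintro ⟨h1, _, h3⟩; exact ⟨h1, h3⟩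
          · rintro ⟨h1, h2⟩; exact ⟨h1, lt_trans hx.1 h1, h2⟩
        rw [hset, MeasureTheory.integral_const_mul, ← intervalIntegral.integral_of_le hx.2,
          val_left hα1 x b]
      rw [Real.norm_eq_abs, abs_of_nonneg (integral_nonneg fun t => norm_nonneg _), hval]
      apply mul_le_mul_of_nonneg_left _ (sq_nonneg _)
      apply (div_le_div_iff_of_pos_right hα1).2
      exact Real.rpow_le_rpow (by linarith [hx.2]) (by linarith [hx.1]) hα1.le
  -- dominator 2
  have dom2 : Integrable (fun p : ℝ × ℝ => ψ p.2 ^ 2 * K p)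
      ((volume.restrict (Set.Ioc a b)).prod (volume.restrict (Set.Ioc a b))) := by
    have hm : AEStronglyMeasurable (fun p : ℝ × ℝ => ψ p.2 ^ 2 * K p)
        ((volume.restrict (Set.Ioc a b)).prod (volume.restrict (Set.Ioc a b))) :=
      (hψsq.aestronglyMeasurable.comp_snd).mul hKm.aestronglyMeasurable
    rw [integrable_prod_iff' hm]
    constructor
    · filter_upwards [ae_restrict_mem measurableSet_Ioc] with t ht
      have hfun : (fun x => ψ t ^ 2 * K (x, t))
          = Set.indicator (Set.Iio t) (fun x => ψ t ^ 2 * (t - x) ^ (α - 1)) := by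
        funext x
        by_cases h : x < t
        · rw [Set.indicator_of_mem (Set.mem_Iio.2 h)]
          rw [hKdef, Set.indicator_of_mem (show ((x, t) : ℝ × ℝ) ∈ S from h)]
        · rw [Set.indicator_of_notMem (fun hc => h (Set.mem_Iio.1 hc))]
          rw [hKdef, Set.indicator_of_notMem (show ((x, t) : ℝ × ℝ) ∉ S from h), mul_zero]
      rw [hfun]
      apply MeasureTheory.IntegrableOn.integrable_indicator _ measurableSet_Iio
      rw [IntegrableOn, Measure.restrict_restrict measurableSet_Iio]
      have hset : Set.Iio t ∩ Set.Ioc a b = Set.Ioo a t := by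
        ext z
        simp only [Set.mem_inter_iff, Set.mem_Iio, Set.mem_Ioc, Set.mem_Ioo]
        constructor
        · rintro ⟨h1, h2, _⟩; exact ⟨h2, h1⟩
        · rintro ⟨h1, h2⟩; exact ⟨h2, h1, le_trans h2.le ht.2⟩
      rw [hset]
      have := (int_right (by linarith : (-1:ℝ) < α - 1) a t)
      rw [intervalIntegrable_iff, Set.uIoc_of_le ht.1.le] at this
      exact (this.mono_set Set.Ioo_subset_Ioc_self).const_mul _
    · apply Integrable.mono' (hψsq.mul_const C) ((hm.norm.prod_swap).integral_prod_right')
      filter_upwards [ae_restrict_mem measurableSet_Ioc] with t ht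
      show ‖∫ x, ‖ψ t ^ 2 * K (x, t)‖ ∂(volume.restrict (Set.Ioc a b))‖ ≤ ψ t ^ 2 * C
      have hval : ∫ x, ‖ψ t ^ 2 * K (x, t)‖ ∂(volume.restrict (Set.Ioc a b))
          = ψ t ^ 2 * ((t - a) ^ α / α) := by
        have hcong : ∀ x, ‖ψ t ^ 2 * K (x, t)‖
            = Set.indicator (Set.Iio t) (fun x => ψ t ^ 2 * (t - x) ^ (α - 1)) x := by
          intro x
          by_cases h : x < t
          · rw [Set.indicator_of_mem (Set.mem_Iio.2 h)]
            rw [hKdef, Set.indicator_of_mem (show ((x, t) : ℝ × ℝ) ∈ S from h)]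
            rw [Real.norm_eq_abs]
            exact abs_of_nonneg (mul_nonneg (sq_nonneg _) (Real.rpow_nonneg (by linarith) _))
          · rw [Set.indicator_of_notMem (fun hc => h (Set.mem_Iio.1 hc))]
            rw [hKdef, Set.indicator_of_notMem (show ((x, t) : ℝ × ℝ) ∉ S from h), mul_zero,
              norm_zero]
        rw [MeasureTheory.integral_congr_ae (Eventually.of_forall hcong)]
        rw [MeasureTheory.integral_indicator measurableSet_Iio,
          Measure.restrict_restrict measurableSet_Iio]
        have hset : Set.Iio t ∩ Set.Ioc a b = Set.Ioo a t := by
          ext z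
          simp only [Set.mem_inter_iff, Set.mem_Iio, Set.mem_Ioc, Set.mem_Ioo]
          constructor
          · rintro ⟨h1, h2, _⟩; exact ⟨h2, h1⟩
          · rintro ⟨h1, h2⟩; exact ⟨h2, h1, le_trans h2.le ht.2⟩
        rw [hset, ← integral_Ioc_eq_integral_Ioo, MeasureTheory.integral_const_mul,
          ← intervalIntegral.integral_of_le ht.1.le, val_right hα1 a t]
      rw [Real.norm_eq_abs, abs_of_nonneg (integral_nonneg fun x => norm_nonneg _), hval]
      apply mul_le_mul_of_nonneg_left _ (sq_nonneg _)
      apply (div_le_div_iff_of_pos_right hα1).2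
      exact Real.rpow_le_rpow (by linarith [ht.1]) (by linarith [ht.2]) hα1.le
  -- integrability of W
  have hIntW : Integrable W
      ((volume.restrict (Set.Ioc a b)).prod (volume.restrict (Set.Ioc a b))) := by
    apply Integrable.mono' (dom1.add dom2) hWm
    filter_upwards with p
    simp only [Pi.add_apply]
    by_cases h : p.1 < p.2
    · rw [hWdef, Set.indicator_of_mem (show p ∈ S from h)]
      rw [hKdef]
      have hps : p ∈ S := h
      rw [show (S.indicator (fun q : ℝ × ℝ => (q.2 - q.1) ^ (α - 1))) p
          = (p.2 - p.1) ^ (α - 1) from Set.indicator_of_mem hps _]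
      have hk0 : (0:ℝ) ≤ (p.2 - p.1) ^ (α - 1) := Real.rpow_nonneg (by linarith) _
      have habs : |φ p.1 * ψ p.2| ≤ φ p.1 ^ 2 + ψ p.2 ^ 2 := by
        rw [abs_mul]
        nlinarith [sq_nonneg (|φ p.1| - |ψ p.2|), sq_abs (φ p.1), sq_abs (ψ p.2),
          abs_nonneg (φ p.1), abs_nonneg (ψ p.2), abs_nonneg (φ p.1 * ψ p.2)]
      rw [Real.norm_eq_abs, abs_mul, abs_of_nonneg hk0]
      calc |φ p.1 * ψ p.2| * (p.2 - p.1) ^ (α - 1)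
          ≤ (φ p.1 ^ 2 + ψ p.2 ^ 2) * (p.2 - p.1) ^ (α - 1) :=
            mul_le_mul_of_nonneg_right habs hk0
        _ = φ p.1 ^ 2 * (p.2 - p.1) ^ (α - 1) + ψ p.2 ^ 2 * (p.2 - p.1) ^ (α - 1) := by ring
    · rw [hWdef, Set.indicator_of_notMem (show p ∉ S from h), norm_zero]
      rw [hKdef, Set.indicator_of_notMem (show p ∉ S from h), mul_zero, mul_zero, add_zero]
  -- Fubini swap
  have hswap := MeasureTheory.integral_integral_swap (f := fun x t => W (x, t)) hIntW
  have hLHS : ∫ x in a..b, φ x * ∫ t in x..b, ψ t * (t - x) ^ (α - 1)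
      = ∫ x, (∫ t, W (x, t) ∂(volume.restrict (Set.Ioc a b))) ∂(volume.restrict (Set.Ioc a b)) := by
    rw [intervalIntegral.integral_of_le hab.le]
    apply setIntegral_congr_fun measurableSet_Ioc
    intro x hx
    dsimp only
    have hfun : (fun t => W (x, t))
        = Set.indicator (Set.Ioi x) (fun t => φ x * (ψ t * (t - x) ^ (α - 1))) := by
      funext t
      by_cases h : x < t
      · rw [Set.indicator_of_mem (Set.mem_Ioi.2 h), hWdef,
          Set.indicator_of_mem (show ((x, t) : ℝ × ℝ) ∈ S from h)]
        ring
      · rw [Set.indicator_of_notMem (fun hc => h (Set.mem_Ioi.1 hc)), hWdef,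
          Set.indicator_of_notMem (show ((x, t) : ℝ × ℝ) ∉ S from h)]
    rw [hfun, MeasureTheory.integral_indicator measurableSet_Ioi,
      Measure.restrict_restrict measurableSet_Ioi]
    have hset : Set.Ioi x ∩ Set.Ioc a b = Set.Ioc x b := by
      ext z
      simp only [Set.mem_inter_iff, Set.mem_Ioi, Set.mem_Ioc]
      constructor
      · rintro ⟨h1, _, h3⟩; exact ⟨h1, h3⟩
      · rintro ⟨h1, h2⟩; exact ⟨h1, lt_trans hx.1 h1, h2⟩
    rw [hset, MeasureTheory.integral_const_mul, ← intervalIntegral.integral_of_le hx.2]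
  have hRHS : ∫ t, (∫ x, W (x, t) ∂(volume.restrict (Set.Ioc a b))) ∂(volume.restrict (Set.Ioc a b))
      = ∫ t in a..b, (∫ x in a..t, φ x * (t - x) ^ (α - 1)) * ψ t := by
    rw [intervalIntegral.integral_of_le hab.le]
    apply setIntegral_congr_fun measurableSet_Ioc
    intro t ht
    dsimp only
    have hfun : (fun x => W (x, t))
        = Set.indicator (Set.Iio t) (fun x => (φ x * (t - x) ^ (α - 1)) * ψ t) := by
      funext x
      by_cases h : x < t
      · rw [Set.indicator_of_mem (Set.mem_Iio.2 h), hWdef,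
          Set.indicator_of_mem (show ((x, t) : ℝ × ℝ) ∈ S from h)]
        ring
      · rw [Set.indicator_of_notMem (fun hc => h (Set.mem_Iio.1 hc)), hWdef,
          Set.indicator_of_notMem (show ((x, t) : ℝ × ℝ) ∉ S from h)]
    rw [hfun, MeasureTheory.integral_indicator measurableSet_Iio,
      Measure.restrict_restrict measurableSet_Iio]
    have hset : Set.Iio t ∩ Set.Ioc a b = Set.Ioo a t := by
      ext z
      simp only [Set.mem_inter_iff, Set.mem_Iio, Set.mem_Ioc, Set.mem_Ioo]
      constructor
      · rintro ⟨h1, h2, _⟩; exact ⟨h2, h1⟩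
      · rintro ⟨h1, h2⟩; exact ⟨h2, h1, le_trans h2.le ht.2⟩
    rw [hset, ← integral_Ioc_eq_integral_Ioo, MeasureTheory.integral_mul_const,
      ← intervalIntegral.integral_of_le ht.1.le]
  rw [hLHS, hswap, hRHS]


lemma semigroup' {α : ℝ} (hα1 : 0 < α) (hα2 : α < 1) {y b : ℝ} (hyb : y < b)
    {ψ : ℝ → ℝ} (hψ : IntegrableOn ψ (Set.Ioc y b) volume) :
    ∫ t in y..b, (∫ s in t..b, ψ s * (s - t) ^ (α - 1)) * (t - y) ^ (-α)
      = (Real.Gamma α * Real.Gamma (1 - α)) * ∫ s in y..b, ψ s := by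
  set c := y + b with hc
  have hφ'int : IntegrableOn (fun s => ψ (c - s)) (Set.Ioc y b) volume := by
    have h1 : IntervalIntegrable ψ volume y b := by
      rw [intervalIntegrable_iff, Set.uIoc_of_le hyb.le]; exact hψ
    have h2 := (h1.comp_sub_left c).symm
    rw [show c - y = b by ring, show c - b = y by ring] at h2
    rw [intervalIntegrable_iff, Set.uIoc_of_le hyb.le] at h2
    exact h2
  have refl1 : ∫ t in y..b, (∫ s in t..b, ψ s * (s - t) ^ (α - 1)) * (t - y) ^ (-α)
      = ∫ t in y..b, (∫ s in y..t, ψ (c - s) * (t - s) ^ (α - 1)) * (b - t) ^ (-α) := by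
    have key := intervalIntegral.integral_comp_sub_left (a := y) (b := b)
      (fun t => (∫ s in t..b, ψ s * (s - t) ^ (α - 1)) * (t - y) ^ (-α)) c
    rw [show c - b = y by ring, show c - y = b by ring] at key
    rw [← key]
    apply intervalIntegral.integral_congr
    intro t _
    dsimp only
    have hin := intervalIntegral.integral_comp_sub_left (a := y) (b := t)
        (fun s => ψ s * (s - (c - t)) ^ (α - 1)) c
    rw [show c - y = b by ring] at hin
    rw [← hin]
    congr 1
    · apply intervalIntegral.integral_congr
      intro s _
      dsimp only
      rw [show c - s - (c - t) = t - s by ring]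
    · rw [show c - t - y = b - t by ring]
  rw [refl1, semigroup hα1 hα2 hyb hφ'int]
  congr 1
  have := intervalIntegral.integral_comp_sub_left (a := y) (b := b) ψ c
  rw [show c - b = y by ring, show c - y = b by ring] at this
  exact this

end FIBP

open FIBP

/-- Fractional integration by parts: if `f = I^α_{a+}φ` and `g = I^α_{b-}ψ` with
`φ, ψ ∈ L²[a,b]`, then `∫ₐᵇ (𝒟^α_{a+}f) g = ∫ₐᵇ f (𝒟^α_{b-}g)`, where the
Riemann--Liouville fractional derivatives are
`𝒟^α_{a+}f(x) = Γ(1-α)⁻¹ d/dx ∫ₐˣ f(t)(x-t)^{-α} dt` and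
`𝒟^α_{b-}g(x) = -Γ(1-α)⁻¹ d/dx ∫ₓᵇ g(t)(t-x)^{-α} dt`. -/
theorem fractional_integration_by_parts (a b α : ℝ) (hab : a < b)
    (hα : α ∈ Set.Ioo (0:ℝ) 1)
    (φ ψ f g : ℝ → ℝ)
    (hφ : MemLp φ 2 (volume.restrict (Set.Icc a b)))
    (hψ : MemLp ψ 2 (volume.restrict (Set.Icc a b)))
    (hf : ∀ x, f x = (Real.Gamma α)⁻¹ * ∫ t in a..x, φ t * (x - t) ^ (α - 1))
    (hg : ∀ x, g x = (Real.Gamma α)⁻¹ * ∫ t in x..b, ψ t * (t - x) ^ (α - 1))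
    (Df Dg : ℝ → ℝ)
    (hDf : ∀ x, Df x =
      (Real.Gamma (1 - α))⁻¹ * deriv (fun y => ∫ t in a..y, f t * (y - t) ^ (-α)) x)
    (hDg : ∀ x, Dg x =
      -(Real.Gamma (1 - α))⁻¹ * deriv (fun y => ∫ t in y..b, g t * (t - y) ^ (-α)) x) :
    ∫ x in a..b, Df x * g x = ∫ x in a..b, f x * Dg x := by
  obtain ⟨hα1, hα2⟩ := hα
  have hΓα : Real.Gamma α ≠ 0 := ne_of_gt (Real.Gamma_pos_of_pos hα1)
  have hΓ1α : Real.Gamma (1 - α) ≠ 0 :=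
    ne_of_gt (Real.Gamma_pos_of_pos (by linarith))
  haveI hfin : IsFiniteMeasure (volume.restrict (Set.Icc a b)) :=
    ⟨by rw [Measure.restrict_apply_univ]; exact measure_Icc_lt_top⟩
  have hle : volume.restrict (Set.Ioc a b) ≤ volume.restrict (Set.Icc a b) :=
    Measure.restrict_mono Set.Ioc_subset_Icc_self le_rfl
  have hφ1 : IntegrableOn φ (Set.Ioc a b) volume :=
    (hφ.integrable one_le_two).mono_measure hle
  have hψ1 : IntegrableOn ψ (Set.Ioc a b) volume :=
    (hψ.integrable one_le_two).mono_measure hle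
  set φ₀ : ℝ → ℝ := (Set.Ioc a b).indicator φ with hφ₀def
  set ψ₀ : ℝ → ℝ := (Set.Ioc a b).indicator ψ with hψ₀def
  have hφ₀int : Integrable φ₀ volume := hφ1.integrable_indicator measurableSet_Ioc
  have hψ₀int : Integrable ψ₀ volume := hψ1.integrable_indicator measurableSet_Ioc
  -- F identity for z ∈ (a, b]
  have hF : ∀ z, a < z → z ≤ b →
      (∫ t in a..z, f t * (z - t) ^ (-α)) = Real.Gamma (1 - α) * ∫ s in a..z, φ₀ s := by
    intro z hz1 hz2
    have h1 : ∫ t in a..z, f t * (z - t) ^ (-α)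
        = ∫ t in a..z,
            (Real.Gamma α)⁻¹ * ((∫ s in a..t, φ s * (t - s) ^ (α - 1)) * (z - t) ^ (-α)) := by
      apply intervalIntegral.integral_congr
      intro t _
      dsimp only
      rw [hf t]
      ring
    rw [h1, intervalIntegral.integral_const_mul,
      semigroup hα1 hα2 hz1 (hφ1.mono_set (Set.Ioc_subset_Ioc_right hz2))]
    have h2 : ∫ s in a..z, φ s = ∫ s in a..z, φ₀ s := by
      apply intervalIntegral.integral_congr_ae
      filter_upwards with s hs
      rw [Set.uIoc_of_le hz1.le] at hs
      rw [hφ₀def]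
      exact (Set.indicator_of_mem (Set.mem_Ioc.2 ⟨hs.1, le_trans hs.2 hz2⟩) φ).symm
    rw [h2]
    field_simp
  -- G identity for z ∈ [a, b)
  have hG : ∀ z, a ≤ z → z < b →
      (∫ t in z..b, g t * (t - z) ^ (-α)) = Real.Gamma (1 - α) * ∫ s in z..b, ψ₀ s := by
    intro z hz1 hz2
    have h1 : ∫ t in z..b, g t * (t - z) ^ (-α)
        = ∫ t in z..b,
            (Real.Gamma α)⁻¹ * ((∫ s in t..b, ψ s * (s - t) ^ (α - 1)) * (t - z) ^ (-α)) := by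
      apply intervalIntegral.integral_congr
      intro t _
      dsimp only
      rw [hg t]
      ring
    rw [h1, intervalIntegral.integral_const_mul,
      semigroup' hα1 hα2 hz2 (hψ1.mono_set (Set.Ioc_subset_Ioc_left hz1))]
    have h2 : ∫ s in z..b, ψ s = ∫ s in z..b, ψ₀ s := by
      apply intervalIntegral.integral_congr_ae
      filter_upwards with s hs
      rw [Set.uIoc_of_le hz2.le] at hs
      rw [hψ₀def]
      exact (Set.indicator_of_mem (Set.mem_Ioc.2 ⟨lt_of_le_of_lt hz1 hs.1, hs.2⟩) ψ).symm
    rw [h2]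
    field_simp
  -- a.e. identification of Df with φ on Ioo a b
  have hDf_ae : ∀ᵐ x ∂(volume : Measure ℝ), x ∈ Set.Ioo a b → Df x = φ x := by
    filter_upwards [ae_ftc hφ₀int a] with x hx hmem
    have hevent : (fun z => ∫ t in a..z, f t * (z - t) ^ (-α))
        =ᶠ[𝓝 x] (fun z => Real.Gamma (1 - α) * ∫ s in a..z, φ₀ s) := by
      filter_upwards [Ioo_mem_nhds hmem.1 hmem.2] with z hz
      exact hF z hz.1 hz.2.le
    have hd : HasDerivAt (fun z => ∫ t in a..z, f t * (z - t) ^ (-α))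
        (Real.Gamma (1 - α) * φ₀ x) x :=
      HasDerivAt.congr_of_eventuallyEq (hx.const_mul (Real.Gamma (1 - α))) hevent
    rw [hDf x, hd.deriv, hφ₀def, Set.indicator_of_mem (Set.mem_Ioc.2 ⟨hmem.1, hmem.2.le⟩)]
    field_simp
  -- a.e. identification of Dg with ψ on Ioo a b
  have hDg_ae : ∀ᵐ x ∂(volume : Measure ℝ), x ∈ Set.Ioo a b → Dg x = ψ x := by
    filter_upwards [ae_ftc hψ₀int a] with x hx hmem
    have hITot : ∀ z, ∫ s in z..b, ψ₀ s = (∫ s in a..b, ψ₀ s) - ∫ s in a..z, ψ₀ s := by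
      intro z
      have h3 := intervalIntegral.integral_add_adjacent_intervals
        (hψ₀int.intervalIntegrable (a := a) (b := z))
        (hψ₀int.intervalIntegrable (a := z) (b := b))
      linarith
    have hevent : (fun z => ∫ t in z..b, g t * (t - z) ^ (-α))
        =ᶠ[𝓝 x] (fun z => Real.Gamma (1 - α) * ((∫ s in a..b, ψ₀ s) - ∫ s in a..z, ψ₀ s)) := by
      filter_upwards [Ioo_mem_nhds hmem.1 hmem.2] with z hz
      rw [hG z hz.1.le hz.2, hITot z]
    have hd : HasDerivAt (fun z => ∫ t in z..b, g t * (t - z) ^ (-α))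
        (Real.Gamma (1 - α) * (0 - ψ₀ x)) x :=
      HasDerivAt.congr_of_eventuallyEq
        (((hasDerivAt_const x (∫ s in a..b, ψ₀ s)).sub hx).const_mul (Real.Gamma (1 - α)))
        hevent
    rw [hDg x, hd.deriv, hψ₀def, Set.indicator_of_mem (Set.mem_Ioc.2 ⟨hmem.1, hmem.2.le⟩)]
    field_simp
    ring
  -- ae x ≠ b
  have hne_b : ∀ᵐ x ∂(volume : Measure ℝ), x ≠ b := by
    rw [ae_iff]
    simp only [ne_eq, not_not, Set.setOf_eq_eq_singleton]
    exact Real.volume_singleton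
  have e1 : ∫ x in a..b, Df x * g x = ∫ x in a..b, φ x * g x := by
    apply intervalIntegral.integral_congr_ae
    filter_upwards [hDf_ae, hne_b] with x hdf hne hmem
    rw [Set.uIoc_of_le hab.le] at hmem
    rw [hdf ⟨hmem.1, lt_of_le_of_ne hmem.2 hne⟩]
  have e2 : ∫ x in a..b, f x * Dg x = ∫ x in a..b, f x * ψ x := by
    apply intervalIntegral.integral_congr_ae
    filter_upwards [hDg_ae, hne_b] with x hdg hne hmem
    rw [Set.uIoc_of_le hab.le] at hmem
    rw [hdg ⟨hmem.1, lt_of_le_of_ne hmem.2 hne⟩]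
  have hφm' : AEStronglyMeasurable φ (volume.restrict (Set.Ioc a b)) :=
    hφ1.aestronglyMeasurable
  have hψm' : AEStronglyMeasurable ψ (volume.restrict (Set.Ioc a b)) :=
    hψ1.aestronglyMeasurable
  have hφsq : Integrable (fun x => φ x ^ 2) (volume.restrict (Set.Ioc a b)) :=
    (hφ.integrable_sq).mono_measure hle
  have hψsq : Integrable (fun x => ψ x ^ 2) (volume.restrict (Set.Ioc a b)) :=
    (hψ.integrable_sq).mono_measure hle
  have mid := main_swap hα1 hα2 hab hφm' hψm' hφsq hψsq
  have e3 : ∫ x in a..b, φ x * g x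
      = (Real.Gamma α)⁻¹ * ∫ x in a..b, φ x * ∫ t in x..b, ψ t * (t - x) ^ (α - 1) := by
    rw [← intervalIntegral.integral_const_mul]
    apply intervalIntegral.integral_congr
    intro x _
    dsimp only
    rw [hg x]
    ring
  have e4 : ∫ x in a..b, f x * ψ x
      = (Real.Gamma α)⁻¹ * ∫ t in a..b, (∫ x in a..t, φ x * (t - x) ^ (α - 1)) * ψ t := by
    rw [← intervalIntegral.integral_const_mul]
    apply intervalIntegral.integral_congr
    intro x _
    dsimp only
    rw [hf x]
    ring
  rw [e1, e2, e3, e4, mid]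
end
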